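/- arXiv:1603.06122 — 5 statements merged into one kernel-verified Lean document; each statement's English description precedes it below -/
import Mathlib

section
/- Suppose (f,C) is a low-defect pair and (g,D) is obtained from (f,C) by a nonempty finite sequence of direct truncations. Then: (1) δ(g,D) < δ(f,C); and (2) the nesting order on the variables of g is the restriction of the nesting order on the variables of f. -/
/-- `CpxW n k` : the positive integer `n` can be written using exactly `k` ones,
with an arbitrary combination of additions and multiplications. -/
inductive CpxW : ℕ → ℕ → Prop
  | one : CpxW 1 1
  | add {a b m n : ℕ} : CpxW a m → CpxW b n → CpxW (a + b) (m + n)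
  | mul {a b m n : ℕ} : CpxW a m → CpxW b n → CpxW (a * b) (m + n)

/-- The integer complexity `‖n‖`: the least number of 1's needed to write `n`
using additions and multiplications. -/
noncomputable def cpx (n : ℕ) : ℕ := sInf {k | CpxW n k}

/-- The defect `δ(n) = ‖n‖ - 3 log₃ n`. -/
noncomputable def defect (n : ℕ) : ℝ := (cpx n : ℝ) - 3 * Real.logb 3 (n : ℝ)

/-- `LDP r f C` : `(f, C)` is a low-defect pair of degree `r`; here a low-defect
polynomial of degree `r` is written in the variables `X 0, …, X (r-1)`. -/
inductive LDP : ℕ → MvPolynomial ℕ ℤ → ℕ → Prop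
  | const (k C : ℕ) (hk : 0 < k) (hC : cpx k ≤ C) :
      LDP 0 (MvPolynomial.C (k : ℤ)) C
  | mul {r₁ r₂ : ℕ} {f₁ f₂ : MvPolynomial ℕ ℤ} {C₁ C₂ : ℕ} :
      LDP r₁ f₁ C₁ → LDP r₂ f₂ C₂ →
      LDP (r₁ + r₂) (f₁ * MvPolynomial.rename (· + r₁) f₂) (C₁ + C₂)
  | step {r : ℕ} {f : MvPolynomial ℕ ℤ} {C : ℕ} (c D : ℕ) (hc : 0 < c) (hD : cpx c ≤ D) :
      LDP r f C → LDP (r + 1) (f * MvPolynomial.X r + MvPolynomial.C (c : ℤ)) (C + D)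

/-- A low-defect polynomial: the first component of some low-defect pair. -/
def LowDefectPoly (f : MvPolynomial ℕ ℤ) : Prop := ∃ r C, LDP r f C

/-- The leading coefficient of a low-defect polynomial of degree `r`:
the coefficient of `x₁ ⋯ x_r`. -/
noncomputable def leadCoeff (r : ℕ) (f : MvPolynomial ℕ ℤ) : ℤ :=
  MvPolynomial.coeff (∑ i ∈ Finset.range r, Finsupp.single i 1) f

/-- The defect `δ(f,C) = C - 3 log₃ a` of a low-defect pair of degree `r`,
where `a` is the leading coefficient. -/
noncomputable def pairDft (r : ℕ) (f : MvPolynomial ℕ ℤ) (C : ℕ) : ℝ :=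
  (C : ℝ) - 3 * Real.logb 3 ((leadCoeff r f : ℤ) : ℝ)

/-- `f(3^{k₁}, …, 3^{k_r})` for a polynomial of degree `r`. -/
noncomputable def eval3 (r : ℕ) (f : MvPolynomial ℕ ℤ) (k : ℕ → ℕ) : ℤ :=
  MvPolynomial.eval (fun i => if i < r then (3 : ℤ) ^ (k i) else 1) f

/-- `δ_{f,C}(k₁,…,k_r) = C + 3(k₁+⋯+k_r) - 3 log₃ f(3^{k₁},…,3^{k_r})`. -/
noncomputable def dftF (r : ℕ) (f : MvPolynomial ℕ ℤ) (C : ℕ) (k : ℕ → ℕ) : ℝ :=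
  (C : ℝ) + 3 * (∑ i ∈ Finset.range r, (k i : ℝ))
    - 3 * Real.logb 3 ((eval3 r f k : ℤ) : ℝ)

/-- The nesting order: `NestLe f i j` means `xᵢ ⪯ xⱼ`, i.e. every monomial of `f`
divisible by `xᵢ` is divisible by `xⱼ`. -/
def NestLe (f : MvPolynomial ℕ ℤ) (i j : ℕ) : Prop :=
  ∀ m ∈ f.support, m i ≠ 0 → m j ≠ 0

/-- `xᵢ` is a variable of (the degree-`r` polynomial) `f` that is minimal with
respect to the nesting order. -/
def IsMinVar (r : ℕ) (f : MvPolynomial ℕ ℤ) (i : ℕ) : Prop :=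
  i < r ∧ ∀ j < r, NestLe f j i → NestLe f i j

/-- Substituting `3^k` for the variable `xᵢ` of `f`, renumbering the later
variables down by one. -/
noncomputable def truncAt (f : MvPolynomial ℕ ℤ) (i k : ℕ) : MvPolynomial ℕ ℤ :=
  MvPolynomial.aeval (fun j => if j < i then MvPolynomial.X j
    else if j = i then MvPolynomial.C ((3 : ℤ) ^ k) else MvPolynomial.X (j - 1)) f

/-- A direct truncation of a "pair with degree" `(r, f, C)`: substitute `3^k`
into a variable of `f` minimal in the nesting order. -/
def DirectTrunc (a b : ℕ × MvPolynomial ℕ ℤ × ℕ) : Prop :=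
  ∃ i k : ℕ, a.1 = b.1 + 1 ∧ IsMinVar a.1 a.2.1 i ∧
    b.2.1 = truncAt a.2.1 i k ∧ b.2.2 = a.2.2 + 3 * k

/-- `n` is a leader: either `3 ∤ n`, or `3 ∣ n` and `‖n‖ < ‖n/3‖ + 3`. -/
def IsLeader (n : ℕ) : Prop := 0 < n ∧ (3 ∣ n → cpx n < cpx (n / 3) + 3)

/-- `(f, C)` (of degree `r`) efficiently 3-represents `n`. -/
def EffRep (r : ℕ) (f : MvPolynomial ℕ ℤ) (C : ℕ) (n : ℕ) : Prop :=
  ∃ k : ℕ → ℕ, (n : ℤ) = eval3 r f k ∧ cpx n = C + 3 * ∑ i ∈ Finset.range r, k i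

/-- The number of `∗`-entries (free coordinates) of `p` among `0, …, r-1`. -/
def starCount (r : ℕ) (p : ℕ → Option ℕ) : ℕ :=
  ((Finset.range r).filter (fun i => p i = none)).card

/-- The 3-substitution of a tuple `p ∈ (ℤ≥0 ∪ {∗})^r` into `f`: substitute
`3^{kᵢ}` for `xᵢ` whenever `p i = some kᵢ`, renumbering the surviving variables
in increasing order. -/
noncomputable def subst3 (f : MvPolynomial ℕ ℤ) (p : ℕ → Option ℕ) : MvPolynomial ℕ ℤ :=
  MvPolynomial.aeval (fun j =>
    match p j with
    | some k => MvPolynomial.C ((3 : ℤ) ^ k)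
    | none => MvPolynomial.X (((Finset.range j).filter (fun i => p i = none)).card)) f

/-- The insertion map `ι` associated to `p`: inserts the arguments into the
coordinates of `p` equal to `∗`. -/
def iotaMap (p : ℕ → Option ℕ) (ℓ : ℕ → ℕ) : ℕ → ℕ := fun j =>
  match p j with
  | some k => k
  | none => ℓ (((Finset.range j).filter (fun i => p i = none)).card)

namespace T7
open MvPolynomial


lemma cpxW_self (n : ℕ) (h : 0 < n) : CpxW n n := by
  induction n with
  | zero => omega
  | succ n ih =>
    rcases Nat.eq_zero_or_pos n with h0 | h0
    · subst h0; exact CpxW.one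
    · exact CpxW.add (ih h0) CpxW.one

lemma cpx_spec (n : ℕ) (h : 0 < n) : CpxW n (cpx n) :=
  Nat.sInf_mem ⟨n, cpxW_self n h⟩

lemma cpx_le {n m : ℕ} (h : CpxW n m) : cpx n ≤ m := Nat.sInf_le h

lemma cpxW_pow3 (k : ℕ) (hk : 0 < k) : CpxW (3 ^ k) (3 * k) := by
  induction k with
  | zero => omega
  | succ k ih =>
    have h3 : CpxW 3 3 := by
      have := CpxW.add (CpxW.add CpxW.one CpxW.one) CpxW.one
      norm_num at this; exact this
    rcases Nat.eq_zero_or_pos k with h0 | h0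
    · subst h0; simpa using h3
    · have := CpxW.mul (ih h0) h3
      have e1 : 3 ^ k * 3 = 3 ^ (k + 1) := by ring
      have e2 : 3 * k + 3 = 3 * (k + 1) := by ring
      rwa [e1, e2] at this

lemma cpx_combo {a c : ℕ} (ha : 0 < a) (hc : 0 < c) (k : ℕ) :
    cpx (a * 3 ^ k + c) ≤ cpx a + cpx c + 3 * k := by
  rcases Nat.eq_zero_or_pos k with h0 | h0
  · subst h0
    have := CpxW.add (cpx_spec a ha) (cpx_spec c hc)
    simpa using cpx_le (by simpa using this)
  · have := CpxW.add (CpxW.mul (cpx_spec a ha) (cpxW_pow3 k h0)) (cpx_spec c hc)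
    have h := cpx_le this
    omega

/-! ### index shift machinery -/

def eF (i : ℕ) : ℕ → ℕ := fun j => if j < i then j else j + 1

lemma eF_inj (i : ℕ) : Function.Injective (eF i) := by
  intro a b h; unfold eF at h; split_ifs at h <;> omega

lemma eF_ne (i j : ℕ) : eF i j ≠ i := by unfold eF; split_ifs <;> omega

lemma eF_lt {i j r : ℕ} (hi : i < r) (hj : j < r - 1) : eF i j < r := by
  unfold eF; split_ifs <;> omega

lemma eF_strictMono (i : ℕ) : StrictMono (eF i) := by
  intro a b h; unfold eF; split_ifs <;> omega

noncomputable def delI (i : ℕ) (m : ℕ →₀ ℕ) : ℕ →₀ ℕ :=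
  Finsupp.comapDomain (eF i) m (fun a _ b _ h => eF_inj i h)

lemma delI_apply (i : ℕ) (m : ℕ →₀ ℕ) (j : ℕ) : delI i m j = m (eF i j) :=
  Finsupp.comapDomain_apply _ _ _ _

lemma decomp (i : ℕ) (m : ℕ →₀ ℕ) :
    Finsupp.mapDomain (eF i) (delI i m) + Finsupp.single i (m i) = m := by
  ext t
  by_cases ht : t = i
  case pos =>
    subst ht
    have h0 : Finsupp.mapDomain (eF t) (delI t m) t = 0 := by
      apply Finsupp.mapDomain_notin_range
      rintro ⟨j, hj⟩; exact eF_ne t j hj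
    simp [h0]
  case neg =>
    obtain ⟨j, rfl⟩ : ∃ j, eF i j = t := by
      refine ⟨if t < i then t else t - 1, ?_⟩
      unfold eF; split_ifs <;> omega
    rw [Finsupp.add_apply, Finsupp.mapDomain_apply (eF_inj i), delI_apply,
      Finsupp.single_apply, if_neg (fun h => ht h.symm), add_zero]

noncomputable def full (r : ℕ) : ℕ →₀ ℕ := ∑ i ∈ Finset.range r, Finsupp.single i 1

lemma full_apply (r j : ℕ) : full r j = if j < r then 1 else 0 := by
  classical
  rw [full, Finset.sum_apply']
  simp only [Finsupp.single_apply]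
  rw [Finset.sum_ite_eq' (Finset.range r) j (fun _ => 1)]
  simp [Finset.mem_range]

/-! ### the truncation as a sum of monomials -/

noncomputable def tf (i k : ℕ) : ℕ → MvPolynomial ℕ ℤ := fun j =>
  if j < i then X j else if j = i then C ((3 : ℤ) ^ k) else X (j - 1)

lemma truncAt_eq (f : MvPolynomial ℕ ℤ) (i k : ℕ) : truncAt f i k = aeval (tf i k) f := rfl

lemma tf_eF (i k j : ℕ) : tf i k (eF i j) = X j := by
  unfold tf eF; split_ifs <;> first | rfl | omega | (congr 1; omega)

lemma trunc_monomial (i k : ℕ) (m : ℕ →₀ ℕ) (c : ℤ) :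
    aeval (tf i k) (monomial m c) = monomial (delI i m) (c * 3 ^ (k * m i)) := by
  conv_lhs => rw [← decomp i m]
  have hsplit : (monomial (Finsupp.mapDomain (eF i) (delI i m) + Finsupp.single i (m i))
      c : MvPolynomial ℕ ℤ)
      = monomial (Finsupp.mapDomain (eF i) (delI i m)) c * monomial (Finsupp.single i (m i)) 1 := by
    rw [monomial_mul, mul_one]
  rw [hsplit, map_mul]
  have h1 : aeval (tf i k) (monomial (Finsupp.mapDomain (eF i) (delI i m)) c)
      = monomial (delI i m) c := by
    rw [← rename_monomial, aeval_rename]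
    have : (tf i k ∘ eF i) = X := by funext j; exact tf_eF i k j
    rw [this, aeval_X_left_apply]
  have h2 : aeval (tf i k) (monomial (Finsupp.single i (m i)) (1 : ℤ))
      = C ((3 : ℤ) ^ (k * m i)) := by
    rw [aeval_monomial]
    rw [Finsupp.prod_single_index (by simp)]
    have : tf i k i = C ((3 : ℤ) ^ k) := by unfold tf; simp
    rw [this, ← C_pow, ← pow_mul]
    simp
  rw [h1, h2, mul_comm, C_mul_monomial, mul_comm]

lemma trunc_eq_sum (f : MvPolynomial ℕ ℤ) (i k : ℕ) :
    truncAt f i k = ∑ m ∈ f.support, monomial (delI i m) (f.coeff m * 3 ^ (k * m i)) := by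
  rw [truncAt_eq]
  conv_lhs => rw [f.as_sum, map_sum]
  exact Finset.sum_congr rfl fun m _ => trunc_monomial i k m (f.coeff m)

lemma trunc_coeff (f : MvPolynomial ℕ ℤ) (i k : ℕ) (n : ℕ →₀ ℕ) :
    coeff n (truncAt f i k)
      = ∑ m ∈ f.support, (if delI i m = n then f.coeff m * 3 ^ (k * m i) else 0) := by
  classical
  rw [trunc_eq_sum]
  rw [coeff_sum]
  exact Finset.sum_congr rfl fun m _ => coeff_monomial n (delI i m) _


def NonnegC (f : MvPolynomial ℕ ℤ) : Prop := ∀ n, 0 ≤ f.coeff n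

def MonoB (r : ℕ) (f : MvPolynomial ℕ ℤ) : Prop :=
  ∀ m ∈ f.support, ∀ j, m j ≤ if j < r then 1 else 0

def Good (r : ℕ) (f : MvPolynomial ℕ ℤ) : Prop :=
  NonnegC f ∧ MonoB r f ∧ 0 < f.coeff (full r) ∧ 0 < f.coeff 0

/-! ### shift -/

lemma shift_inj (r : ℕ) : Function.Injective (· + r : ℕ → ℕ) := add_left_injective r

lemma S_apply (r : ℕ) (m : ℕ →₀ ℕ) (j : ℕ) :
    Finsupp.mapDomain (· + r) m j = if r ≤ j then m (j - r) else 0 := by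
  split_ifs with h
  · have hj : j = (j - r) + r := by omega
    conv_lhs => rw [hj]
    rw [Finsupp.mapDomain_apply (shift_inj r)]
  · apply Finsupp.mapDomain_notin_range
    rintro ⟨a, ha⟩; simp at ha; omega

lemma rename_nonneg {f : MvPolynomial ℕ ℤ} {r : ℕ} (h : NonnegC f) :
    NonnegC (rename (· + r) f) := by
  intro n
  by_cases hz : coeff n (rename (· + r) f) = 0
  · rw [hz]
  · obtain ⟨u, hu, -⟩ := coeff_rename_ne_zero _ _ _ hz
    rw [← hu, coeff_rename_mapDomain _ (shift_inj r)]
    exact h u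

lemma mul_nonneg' {f g : MvPolynomial ℕ ℤ} (hf : NonnegC f) (hg : NonnegC g) :
    NonnegC (f * g) := by
  intro n
  classical
  rw [coeff_mul]
  exact Finset.sum_nonneg fun x _ => mul_nonneg (hf x.1) (hg x.2)

lemma coeff_mul_pos {f g : MvPolynomial ℕ ℤ} (hf : NonnegC f) (hg : NonnegC g)
    {a b : ℕ →₀ ℕ} (ha : 0 < f.coeff a) (hb : 0 < g.coeff b) :
    0 < (f * g).coeff (a + b) := by
  classical
  rw [coeff_mul]
  refine Finset.sum_pos' (fun x _ => mul_nonneg (hf x.1) (hg x.2)) ⟨(a, b), ?_, mul_pos ha hb⟩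
  rw [Finset.HasAntidiagonal.mem_antidiagonal]

lemma mem_supp_mul {f₁ f₂ : MvPolynomial ℕ ℤ} {r₁ : ℕ} {n : ℕ →₀ ℕ}
    (h : (f₁ * rename (· + r₁) f₂).coeff n ≠ 0) :
    ∃ m₁ m₂, f₁.coeff m₁ ≠ 0 ∧ f₂.coeff m₂ ≠ 0 ∧ n = m₁ + Finsupp.mapDomain (· + r₁) m₂ := by
  classical
  rw [coeff_mul] at h
  obtain ⟨x, hx, hne⟩ := Finset.exists_ne_zero_of_sum_ne_zero h
  rw [Finset.HasAntidiagonal.mem_antidiagonal] at hx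
  have h1 : f₁.coeff x.1 ≠ 0 := fun h0 => hne (by rw [h0, zero_mul])
  have h2 : coeff x.2 (rename (· + r₁) f₂) ≠ 0 := fun h0 => hne (by rw [h0, mul_zero])
  obtain ⟨u, hu, hu2⟩ := coeff_rename_ne_zero _ _ _ h2
  exact ⟨x.1, u, h1, hu2, by rw [hu, hx]⟩

lemma supp_mul_iff {f₁ f₂ : MvPolynomial ℕ ℤ} {r₁ : ℕ}
    (h1 : NonnegC f₁) (h2 : NonnegC f₂) (n : ℕ →₀ ℕ) :
    (f₁ * rename (· + r₁) f₂).coeff n ≠ 0 ↔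
      ∃ m₁ m₂, f₁.coeff m₁ ≠ 0 ∧ f₂.coeff m₂ ≠ 0 ∧ n = m₁ + Finsupp.mapDomain (· + r₁) m₂ := by
  constructor
  · exact mem_supp_mul
  · rintro ⟨m₁, m₂, hm₁, hm₂, rfl⟩
    have hb : 0 < coeff (Finsupp.mapDomain (· + r₁) m₂) (rename (· + r₁) f₂) := by
      rw [coeff_rename_mapDomain _ (shift_inj r₁)]
      exact lt_of_le_of_ne (h2 m₂) (Ne.symm hm₂)
    exact (coeff_mul_pos h1 (rename_nonneg h2) (lt_of_le_of_ne (h1 m₁) (Ne.symm hm₁)) hb).ne'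

lemma full_split (r₁ r₂ : ℕ) :
    full (r₁ + r₂) = full r₁ + Finsupp.mapDomain (· + r₁) (full r₂) := by
  ext j
  rw [Finsupp.add_apply, S_apply, full_apply, full_apply]
  split_ifs <;> first | rfl | (rw [full_apply]; split_ifs <;> omega) | omega

/-! ### step support -/

lemma sub_single_add {n : ℕ →₀ ℕ} {r : ℕ} (h : n r ≠ 0) :
    (n - Finsupp.single r 1) + Finsupp.single r 1 = n := by
  ext j
  rw [Finsupp.add_apply, Finsupp.tsub_apply, Finsupp.single_apply]
  split_ifs with hj
  · subst hj; omega
  · omega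

lemma coeff_step (f : MvPolynomial ℕ ℤ) (r c : ℕ) (n : ℕ →₀ ℕ) :
    (f * X r + C (c : ℤ)).coeff n
      = (if n r ≠ 0 then f.coeff (n - Finsupp.single r 1) else 0)
        + (if n = 0 then (c : ℤ) else 0) := by
  classical
  rw [coeff_add, coeff_mul_X', coeff_C]
  congr 1
  · simp [Finsupp.mem_support_iff]
  · split_ifs with h1 h2 h2 <;> first | rfl | (exact absurd h1.symm h2) | (exact absurd h2.symm h1)

lemma supp_step_iff {f : MvPolynomial ℕ ℤ} {r c : ℕ} (hb : MonoB r f) (hc : 0 < c)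
    (n : ℕ →₀ ℕ) :
    (f * X r + C (c : ℤ)).coeff n ≠ 0 ↔
      (∃ m, f.coeff m ≠ 0 ∧ n = m + Finsupp.single r 1) ∨ n = 0 := by
  rw [coeff_step]
  rcases eq_or_ne n 0 with rfl | hn
  · simp [Finsupp.single_apply]
    omega
  · simp only [if_neg hn, add_zero]
    constructor
    · intro h
      split_ifs at h with h1
      · exact Or.inl ⟨n - Finsupp.single r 1, h, (sub_single_add h1).symm⟩
      · exact absurd rfl h
    · rintro (⟨m, hm, rfl⟩ | h)
      · have hr : ((m + Finsupp.single r 1 : ℕ →₀ ℕ)) r ≠ 0 := by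
          simp
        rw [if_pos hr]
        have : m + Finsupp.single r 1 - Finsupp.single r 1 = m := by
          ext j; rw [Finsupp.tsub_apply, Finsupp.add_apply]; omega
        rwa [this]
      · exact absurd h hn


lemma full_zero : full 0 = 0 := by simp [full]

lemma full_succ (r : ℕ) : full (r + 1) = full r + Finsupp.single r 1 := by
  ext j
  rw [Finsupp.add_apply, full_apply, full_apply, Finsupp.single_apply]
  split_ifs <;> omega

lemma full_ne_zero_apply (r : ℕ) : (full r + Finsupp.single r 1 : ℕ →₀ ℕ) r = 1 := by
  rw [Finsupp.add_apply, full_apply, Finsupp.single_apply]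
  simp

lemma good_of_ldp {r : ℕ} {f : MvPolynomial ℕ ℤ} {C : ℕ} (h : LDP r f C) : Good r f := by
  induction h with
  | const k C hk hC =>
    refine ⟨?_, ?_, ?_, ?_⟩
    · intro n; rw [coeff_C]; split_ifs
      · exact_mod_cast Nat.zero_le k
      · exact le_refl 0
    · intro m hm j
      rw [MvPolynomial.mem_support_iff, coeff_C] at hm
      split_ifs at hm with h0
      · rw [← h0]; simp
      · exact absurd rfl hm
    · rw [full_zero, coeff_C, if_pos rfl]; exact_mod_cast hk
    · rw [coeff_C, if_pos rfl]; exact_mod_cast hk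
  | mul h1 h2 g1 g2 =>
    rename_i r1 r2 f1 f2 C1 C2
    refine ⟨mul_nonneg' g1.1 (rename_nonneg g2.1), ?_, ?_, ?_⟩
    · intro m hm j
      rw [MvPolynomial.mem_support_iff] at hm
      obtain ⟨m₁, m₂, hm1, hm2, rfl⟩ := mem_supp_mul hm
      have b1 := g1.2.1 m₁ (MvPolynomial.mem_support_iff.2 hm1) j
      have b2 := g2.2.1 m₂ (MvPolynomial.mem_support_iff.2 hm2) (j - r1)
      rw [Finsupp.add_apply, S_apply]
      split_ifs at b1 b2 ⊢ <;> omega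
    · rw [full_split]
      refine coeff_mul_pos g1.1 (rename_nonneg g2.1) g1.2.2.1 ?_
      rw [coeff_rename_mapDomain _ (shift_inj _)]
      exact g2.2.2.1
    · have h0 : 0 < coeff (Finsupp.mapDomain (· + r1) (0 : ℕ →₀ ℕ)) (rename (· + r1) f2) := by
        rw [coeff_rename_mapDomain _ (shift_inj _)]
        exact g2.2.2.2
      have := coeff_mul_pos g1.1 (rename_nonneg g2.1) g1.2.2.2 h0
      simpa using this
  | step c D hc hD h g =>
    rename_i r f C
    refine ⟨?_, ?_, ?_, ?_⟩
    · intro n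
      rw [coeff_add]
      refine add_nonneg ?_ ?_
      · rw [coeff_mul_X']
        split_ifs
        · exact g.1 _
        · exact le_refl 0
      · rw [coeff_C]
        split_ifs
        · exact_mod_cast Nat.zero_le c
        · exact le_refl 0
    · intro m hm j
      rw [MvPolynomial.mem_support_iff, supp_step_iff g.2.1 hc] at hm
      rcases hm with ⟨m', hm', rfl⟩ | rfl
      · have b := g.2.1 m' (MvPolynomial.mem_support_iff.2 hm') j
        rw [Finsupp.add_apply, Finsupp.single_apply]
        split_ifs at b ⊢ <;> omega
      · simp
    · rw [full_succ, coeff_add, coeff_mul_X, coeff_C, if_neg ?_, add_zero]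
      · exact g.2.2.1
      · intro hcon
        have h2 : (0 : ℕ →₀ ℕ) r = (full r + Finsupp.single r 1 : ℕ →₀ ℕ) r := by rw [← hcon]
        rw [full_ne_zero_apply] at h2
        simp at h2
    · rw [coeff_step]
      simp only [Finsupp.coe_zero, Pi.zero_apply, ne_eq, not_true_eq_false, if_false,
        if_pos rfl, zero_add]
      · exact_mod_cast hc

/-! ### nesting order transfer -/

lemma nestle_mul_low {r1 r2 : ℕ} {f1 f2 : MvPolynomial ℕ ℤ} (g1 : Good r1 f1) (g2 : Good r2 f2)
    {i j : ℕ} (hi : i < r1) (hj : j < r1) :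
    NestLe (f1 * rename (· + r1) f2) i j ↔ NestLe f1 i j := by
  constructor
  · intro h m hm hmi
    have hmem : m ∈ (f1 * rename (· + r1) f2).support := by
      rw [MvPolynomial.mem_support_iff]
      have := (supp_mul_iff g1.1 g2.1 (m + Finsupp.mapDomain (· + r1) 0)).2
        ⟨m, 0, MvPolynomial.mem_support_iff.1 hm, g2.2.2.2.ne', rfl⟩
      simpa using this
    exact h m hmem hmi
  · intro h m hm hmi
    rw [MvPolynomial.mem_support_iff] at hm
    obtain ⟨m1, m2, h1, h2, rfl⟩ := mem_supp_mul hm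
    have e1 : (m1 + Finsupp.mapDomain (· + r1) m2) i = m1 i := by
      rw [Finsupp.add_apply, S_apply, if_neg (by omega), add_zero]
    have e2 : (m1 + Finsupp.mapDomain (· + r1) m2) j = m1 j := by
      rw [Finsupp.add_apply, S_apply, if_neg (by omega), add_zero]
    rw [e1] at hmi
    rw [e2]
    exact h m1 (MvPolynomial.mem_support_iff.2 h1) hmi

lemma nestle_mul_high {r1 r2 : ℕ} {f1 f2 : MvPolynomial ℕ ℤ} (g1 : Good r1 f1) (g2 : Good r2 f2)
    (i j : ℕ) :
    NestLe (f1 * rename (· + r1) f2) (i + r1) (j + r1) ↔ NestLe f2 i j := by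
  constructor
  · intro h m hm hmi
    have hmem : (0 + Finsupp.mapDomain (· + r1) m) ∈ (f1 * rename (· + r1) f2).support := by
      rw [MvPolynomial.mem_support_iff]
      exact (supp_mul_iff g1.1 g2.1 _).2
        ⟨0, m, g1.2.2.2.ne', MvPolynomial.mem_support_iff.1 hm, rfl⟩
    have happ : ∀ t, (0 + Finsupp.mapDomain (· + r1) m : ℕ →₀ ℕ) (t + r1) = m t := by
      intro t
      rw [Finsupp.add_apply, Finsupp.mapDomain_apply (shift_inj r1)]
      simp
    have := h _ hmem (by rw [happ]; exact hmi)
    rwa [happ] at this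
  · intro h m hm hmi
    rw [MvPolynomial.mem_support_iff] at hm
    obtain ⟨m1, m2, h1, h2, rfl⟩ := mem_supp_mul hm
    have hm1 : ∀ t, r1 ≤ t → m1 t = 0 := by
      intro t ht
      have := g1.2.1 m1 (MvPolynomial.mem_support_iff.2 h1) t
      rw [if_neg (by omega)] at this
      omega
    have e1 : (m1 + Finsupp.mapDomain (· + r1) m2) (i + r1) = m2 i := by
      rw [Finsupp.add_apply, Finsupp.mapDomain_apply (shift_inj r1), hm1 _ (by omega), zero_add]
    have e2 : (m1 + Finsupp.mapDomain (· + r1) m2) (j + r1) = m2 j := by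
      rw [Finsupp.add_apply, Finsupp.mapDomain_apply (shift_inj r1), hm1 _ (by omega), zero_add]
    rw [e1] at hmi
    rw [e2]
    exact h m2 (MvPolynomial.mem_support_iff.2 h2) hmi

lemma nestle_step_top {f : MvPolynomial ℕ ℤ} {r c : ℕ} (hb : MonoB r f) (hc : 0 < c) (j : ℕ) :
    NestLe (f * X r + C (c : ℤ)) j r := by
  intro m hm hmj
  rw [MvPolynomial.mem_support_iff, supp_step_iff hb hc] at hm
  rcases hm with ⟨m', _, rfl⟩ | rfl
  · have : (m' + Finsupp.single r 1 : ℕ →₀ ℕ) r = m' r + 1 := by simp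
    omega
  · simp at hmj

lemma nestle_step_not {f : MvPolynomial ℕ ℤ} {r c : ℕ} (g : Good r f) (hc : 0 < c)
    {j : ℕ} (hj : j ≠ r) : ¬ NestLe (f * X r + C (c : ℤ)) r j := by
  intro h
  have hmem : Finsupp.single r 1 ∈ (f * X r + C (c : ℤ)).support := by
    rw [MvPolynomial.mem_support_iff, supp_step_iff g.2.1 hc]
    exact Or.inl ⟨0, g.2.2.2.ne', by simp⟩
  have := h _ hmem (by simp)
  rw [Finsupp.single_apply, if_neg (fun hh => hj hh.symm)] at this
  exact this rfl

lemma nestle_step_iff {f : MvPolynomial ℕ ℤ} {r c : ℕ} (g : Good r f) (hc : 0 < c)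
    {j j' : ℕ} (hj : j ≠ r) (hj' : j' ≠ r) :
    NestLe (f * X r + C (c : ℤ)) j j' ↔ NestLe f j j' := by
  constructor
  · intro h m hm hmj
    have hmem : m + Finsupp.single r 1 ∈ (f * X r + C (c : ℤ)).support := by
      rw [MvPolynomial.mem_support_iff, supp_step_iff g.2.1 hc]
      exact Or.inl ⟨m, MvPolynomial.mem_support_iff.1 hm, rfl⟩
    have ej : ∀ t, t ≠ r → (m + Finsupp.single r 1 : ℕ →₀ ℕ) t = m t := by
      intro t ht
      rw [Finsupp.add_apply, Finsupp.single_apply, if_neg (fun hh => ht hh.symm), add_zero]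
    have := h _ hmem (by rw [ej j hj]; exact hmj)
    rwa [ej j' hj'] at this
  · intro h m hm hmj
    rw [MvPolynomial.mem_support_iff, supp_step_iff g.2.1 hc] at hm
    rcases hm with ⟨m', hm', rfl⟩ | rfl
    · have ej : ∀ t, t ≠ r → (m' + Finsupp.single r 1 : ℕ →₀ ℕ) t = m' t := by
        intro t ht
        rw [Finsupp.add_apply, Finsupp.single_apply, if_neg (fun hh => ht hh.symm), add_zero]
      rw [ej j hj] at hmj
      rw [ej j' hj']
      exact h m' (MvPolynomial.mem_support_iff.2 hm') hmj
    · simp at hmj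

/-! ### minimal variable transfer -/

lemma minvar_mul_low {r1 r2 : ℕ} {f1 f2 : MvPolynomial ℕ ℤ} (g1 : Good r1 f1) (g2 : Good r2 f2)
    {i : ℕ} (h : IsMinVar (r1 + r2) (f1 * rename (· + r1) f2) i) (hi : i < r1) :
    IsMinVar r1 f1 i :=
  ⟨hi, fun j hj hn => (nestle_mul_low g1 g2 hi hj).1
    (h.2 j (by omega) ((nestle_mul_low g1 g2 hj hi).2 hn))⟩

lemma minvar_mul_high {r1 r2 : ℕ} {f1 f2 : MvPolynomial ℕ ℤ} (g1 : Good r1 f1) (g2 : Good r2 f2)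
    {i : ℕ} (h : IsMinVar (r1 + r2) (f1 * rename (· + r1) f2) i) (hi : r1 ≤ i) :
    IsMinVar r2 f2 (i - r1) := by
  have hlt := h.1
  have hE : i - r1 + r1 = i := by omega
  refine ⟨by omega, fun j hj hn => ?_⟩
  have h1 : NestLe (f1 * rename (· + r1) f2) (j + r1) i := by
    have := (nestle_mul_high g1 g2 j (i - r1)).2 hn
    rwa [hE] at this
  have h2 := h.2 (j + r1) (by omega) h1
  have h3 : NestLe (f1 * rename (· + r1) f2) ((i - r1) + r1) (j + r1) := by rwa [hE]
  exact (nestle_mul_high g1 g2 (i - r1) j).1 h3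

lemma minvar_step {f : MvPolynomial ℕ ℤ} {r c : ℕ} (g : Good r f) (hc : 0 < c) {i : ℕ}
    (h : IsMinVar (r + 1) (f * X r + C (c : ℤ)) i) :
    (i < r ∧ IsMinVar r f i) ∨ (i = r ∧ r = 0) := by
  rcases eq_or_ne i r with hieq | hi
  · right
    refine ⟨hieq, ?_⟩
    by_contra hr
    have h0 : NestLe (f * X r + C (c : ℤ)) 0 r := nestle_step_top g.2.1 hc 0
    have h2 := h.2 0 (by omega) (by rw [hieq]; exact h0)
    rw [hieq] at h2
    exact nestle_step_not g hc (by omega) h2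
  · left
    have hir : i < r := by have := h.1; omega
    refine ⟨hir, hir, fun j hj hn => ?_⟩
    have := h.2 j (by omega) ((nestle_step_iff g hc (by omega) hi).2 hn)
    exact (nestle_step_iff g hc hi (by omega)).1 this

lemma apply_ne_imp_ne_zero {n : ℕ →₀ ℕ} {r : ℕ} (h : n r ≠ 0) : ¬((0 : ℕ →₀ ℕ) = n) :=
  fun hc => h (by rw [← hc]; simp)

/-! ### minimal variables give the second-highest monomial -/

lemma min_erase {r : ℕ} {f : MvPolynomial ℕ ℤ} {C : ℕ} (h : LDP r f C) :
    ∀ i, IsMinVar r f i → 0 < f.coeff ((full r).erase i) := by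
  induction h with
  | const k C hk hC =>
    intro i hi
    exact absurd hi.1 (Nat.not_lt_zero i)
  | mul h1 h2 ih1 ih2 =>
    rename_i r1 r2 f1 f2 C1 C2
    have g1 := good_of_ldp h1
    have g2 := good_of_ldp h2
    intro i hi
    have hlt := hi.1
    rcases lt_or_ge i r1 with hir | hir
    · have hkey := ih1 i (minvar_mul_low g1 g2 hi hir)
      have hsplit : (full (r1 + r2)).erase i
          = (full r1).erase i + Finsupp.mapDomain (· + r1) (full r2) := by
        ext j
        simp only [Finsupp.erase_apply, Finsupp.add_apply, S_apply, full_apply]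
        split_ifs <;> omega
      rw [hsplit]
      refine coeff_mul_pos g1.1 (rename_nonneg g2.1) hkey ?_
      rw [coeff_rename_mapDomain _ (shift_inj r1)]
      exact g2.2.2.1
    · have hkey := ih2 (i - r1) (minvar_mul_high g1 g2 hi hir)
      have hsplit : (full (r1 + r2)).erase i
          = full r1 + Finsupp.mapDomain (· + r1) ((full r2).erase (i - r1)) := by
        ext j
        simp only [Finsupp.erase_apply, Finsupp.add_apply, S_apply, full_apply]
        split_ifs <;> omega
      rw [hsplit]
      refine coeff_mul_pos g1.1 (rename_nonneg g2.1) g1.2.2.1 ?_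
      rw [coeff_rename_mapDomain _ (shift_inj r1)]
      exact hkey
  | step c D hc hD h ih =>
    rename_i r f C
    have g := good_of_ldp h
    intro i hi
    rcases minvar_step g hc hi with ⟨hir, hmin⟩ | ⟨rfl, rfl⟩
    · have hkey := ih i hmin
      have hsplit : (full (r + 1)).erase i = (full r).erase i + Finsupp.single r 1 := by
        ext j
        simp only [Finsupp.erase_apply, Finsupp.add_apply, full_apply, Finsupp.single_apply]
        split_ifs <;> omega
      rw [hsplit, coeff_add, coeff_mul_X, coeff_C, if_neg ?_, add_zero]
      · exact hkey
      · refine apply_ne_imp_ne_zero (n := (full r).erase i + Finsupp.single r 1) (r := r) ?_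
        rw [Finsupp.add_apply, Finsupp.erase_apply, full_apply]
        split_ifs <;> simp <;> omega
    · have hzero : (full (0 + 1)).erase 0 = 0 := by
        ext j
        simp only [Finsupp.erase_apply, full_apply, Finsupp.coe_zero, Pi.zero_apply]
        split_ifs <;> omega
      rw [hzero, coeff_step]
      simp only [Finsupp.coe_zero, Pi.zero_apply, ne_eq, not_true_eq_false, if_false,
        if_pos rfl, zero_add]
      exact_mod_cast hc

/-! ### degree-zero pairs -/

lemma ldp_zero {f : MvPolynomial ℕ ℤ} {C0 : ℕ} (h : LDP 0 f C0) :
    ∃ a : ℕ, 0 < a ∧ f = C (a : ℤ) ∧ cpx a ≤ C0 := by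
  suffices H : ∀ r (f : MvPolynomial ℕ ℤ) C0, LDP r f C0 → r = 0 →
      ∃ a : ℕ, 0 < a ∧ f = C (a : ℤ) ∧ cpx a ≤ C0 from H 0 f C0 h rfl
  intro r f C0 h
  induction h with
  | const k C hk hC => exact fun _ => ⟨k, hk, rfl, hC⟩
  | mul h1 h2 ih1 ih2 =>
    rename_i r1 r2 f1 f2 C1 C2
    intro hr
    obtain ⟨a1, ha1, rfl, hc1⟩ := ih1 (by omega)
    obtain ⟨a2, ha2, rfl, hc2⟩ := ih2 (by omega)
    refine ⟨a1 * a2, Nat.mul_pos ha1 ha2, ?_, ?_⟩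
    · rw [rename_C, ← C_mul, Nat.cast_mul]
    · have := cpx_le (CpxW.mul (cpx_spec a1 ha1) (cpx_spec a2 ha2))
      omega
  | step c D hc hD h ih => intro hr; omega

/-! ### aeval fixing low variables -/

lemma aeval_fix {f : MvPolynomial ℕ ℤ} {r : ℕ} (hb : MonoB r f)
    {g : ℕ → MvPolynomial ℕ ℤ} (hg : ∀ j < r, g j = X j) : aeval g f = f := by
  conv_lhs => rw [f.as_sum, map_sum]
  conv_rhs => rw [f.as_sum]
  refine Finset.sum_congr rfl fun m hm => ?_
  rw [aeval_monomial]
  have hp : (m.prod fun i k => g i ^ k) = m.prod fun i k => X i ^ k := by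
    apply Finsupp.prod_congr
    intro j hj
    have hjr : j < r := by
      by_contra hcon
      have h1 := hb m hm j
      rw [if_neg (by omega)] at h1
      have h2 := Finsupp.mem_support_iff.1 hj
      omega
    rw [hg j hjr]
  rw [hp, algebraMap_eq, ← monomial_eq]

/-! ### truncation preserves low-defect pairs -/

lemma trunc_ldp {r : ℕ} {f : MvPolynomial ℕ ℤ} {C0 : ℕ} (h : LDP r f C0) :
    ∀ i k, IsMinVar r f i → LDP (r - 1) (truncAt f i k) (C0 + 3 * k) := by
  induction h with
  | const k C hk hC => exact fun i k' hi => absurd hi.1 (Nat.not_lt_zero i)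
  | mul h1 h2 ih1 ih2 =>
    rename_i r1 r2 f1 f2 C1 C2
    have g1 := good_of_ldp h1
    have g2 := good_of_ldp h2
    intro i k hi
    have hlt := hi.1
    rcases lt_or_ge i r1 with hir | hir
    · have hmin := minvar_mul_low g1 g2 hi hir
      have heq : truncAt (f1 * rename (· + r1) f2) i k
          = truncAt f1 i k * rename (· + (r1 - 1)) f2 := by
        rw [truncAt_eq, truncAt_eq, map_mul]
        congr 1
        rw [aeval_rename]
        have haev := aeval_rename (· + (r1 - 1)) (X : ℕ → MvPolynomial ℕ ℤ) f2
        rw [aeval_X_left_apply] at haev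
        rw [haev]
        have hfun : (tf i k ∘ (· + r1)) = (X ∘ (· + (r1 - 1)) : ℕ → MvPolynomial ℕ ℤ) := by
          funext j
          simp only [Function.comp_apply, tf]
          split_ifs <;> first | (exfalso; omega) | (congr 1; omega)
        rw [hfun]
      rw [heq]
      have hL := LDP.mul (ih1 i k hmin) h2
      have e1 : r1 - 1 + r2 = r1 + r2 - 1 := by omega
      have e2 : C1 + 3 * k + C2 = C1 + C2 + 3 * k := by omega
      rwa [e1, e2] at hL
    · have hmin := minvar_mul_high g1 g2 hi hir
      have heq : truncAt (f1 * rename (· + r1) f2) i k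
          = f1 * rename (· + r1) (truncAt f2 (i - r1) k) := by
        rw [truncAt_eq, map_mul]
        congr 1
        · exact aeval_fix g1.2.1 (fun j hj => by
            simp only [tf]
            rw [if_pos (by omega)])
        · rw [aeval_rename, truncAt_eq]
          have hcomp := DFunLike.congr_fun (comp_aeval (tf (i - r1) k)
            (rename (· + r1) : MvPolynomial ℕ ℤ →ₐ[ℤ] MvPolynomial ℕ ℤ)) f2
          simp only [AlgHom.comp_apply] at hcomp
          rw [hcomp]
          have hfun : (tf i k ∘ (· + r1))
              = fun j => rename (· + r1) (tf (i - r1) k j) := by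
            funext j
            simp only [Function.comp_apply, tf]
            split_ifs <;>
              first
              | (exfalso; omega)
              | (rw [rename_C])
              | (rw [rename_X]; all_goals (congr 1; omega))
          rw [hfun]
      rw [heq]
      have hL := LDP.mul h1 (ih2 (i - r1) k hmin)
      have e1 : r1 + (r2 - 1) = r1 + r2 - 1 := by omega
      have e2 : C1 + (C2 + 3 * k) = C1 + C2 + 3 * k := by omega
      rwa [e1, e2] at hL
  | step c D hc hD h ih =>
    rename_i r f Cn
    have g := good_of_ldp h
    intro i k hi
    rcases minvar_step g hc hi with ⟨hir, hmin⟩ | ⟨hieq, hreq⟩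
    · have heq : truncAt (f * X r + C (c : ℤ)) i k
          = truncAt f i k * X (r - 1) + C (c : ℤ) := by
        rw [truncAt_eq, map_add, map_mul, truncAt_eq, aeval_X, aeval_C, algebraMap_eq]
        congr 2
        simp only [tf]
        split_ifs <;> first | (exfalso; omega) | rfl
      rw [heq]
      have hL := LDP.step c D hc hD (ih i k hmin)
      have e1 : r - 1 + 1 = r + 1 - 1 := by omega
      have e2 : Cn + 3 * k + D = Cn + D + 3 * k := by omega
      rwa [e1, e2] at hL
    · subst hreq
      subst hieq
      obtain ⟨a, ha, rfl, hca⟩ := ldp_zero h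
      have heq : truncAt (C (a : ℤ) * X 0 + C (c : ℤ)) 0 k
          = C ((a * 3 ^ k + c : ℕ) : ℤ) := by
        rw [truncAt_eq, map_add, map_mul, aeval_C, aeval_C, aeval_X, algebraMap_eq]
        have htf : tf 0 k 0 = C ((3:ℤ)^k) := by simp [tf]
        rw [htf, ← C_mul, ← C_add]
        push_cast
        ring_nf
      rw [heq]
      have hC' : cpx (a * 3 ^ k + c) ≤ Cn + D + 3 * k := by
        have := cpx_combo ha hc k
        omega
      exact LDP.const _ _ (Nat.add_pos_right _ hc) hC'

/-! ### the leading coefficient of a truncation -/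

lemma leadCoeff_eq (r : ℕ) (f : MvPolynomial ℕ ℤ) : leadCoeff r f = f.coeff (full r) := rfl

lemma delI_erase (i : ℕ) (m : ℕ →₀ ℕ) : delI i (m.erase i) = delI i m := by
  ext j
  rw [delI_apply, delI_apply, Finsupp.erase_ne (eF_ne i j)]

lemma trunc_lead {r : ℕ} {f : MvPolynomial ℕ ℤ} {C0 : ℕ} (h : LDP r f C0) {i : ℕ}
    (hi : IsMinVar r f i) (k : ℕ) :
    (truncAt f i k).coeff (full (r - 1))
      = f.coeff (full r) * 3 ^ k + f.coeff ((full r).erase i) := by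
  classical
  have g := good_of_ldp h
  have hlt := hi.1
  have hpair_ne : full r ≠ (full r).erase i := by
    intro hcon
    have h1 : full r i = ((full r).erase i) i := by rw [← hcon]
    rw [Finsupp.erase_same, full_apply, if_pos hlt] at h1
    omega
  have hdel_full : delI i (full r) = full (r - 1) := by
    ext j
    rw [delI_apply, full_apply, full_apply]
    unfold eF
    split_ifs <;> omega
  have hdel_erase : delI i ((full r).erase i) = full (r - 1) := by
    rw [delI_erase, hdel_full]
  rw [trunc_coeff]
  have hsub : ({full r, (full r).erase i} : Finset (ℕ →₀ ℕ)) ⊆ f.support := by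
    intro m hm
    rcases Finset.mem_insert.1 hm with rfl | hm
    · exact MvPolynomial.mem_support_iff.2 g.2.2.1.ne'
    · rw [Finset.mem_singleton] at hm
      subst hm
      exact MvPolynomial.mem_support_iff.2 (min_erase h i hi).ne'
  rw [← Finset.sum_subset hsub ?vanish]
  · rw [Finset.sum_insert (by rw [Finset.mem_singleton]; exact hpair_ne), Finset.sum_singleton]
    rw [if_pos hdel_full, if_pos hdel_erase]
    have hfi : (full r) i = 1 := by rw [full_apply, if_pos hlt]
    have hei : ((full r).erase i) i = 0 := Finsupp.erase_same
    rw [hfi, hei]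
    norm_num
  case vanish =>
    intro m hm hnot
    split_ifs with hdel
    · exfalso
      apply hnot
      have hb := g.2.1 m hm
      have hval : ∀ j, m (eF i j) = if eF i j < r then 1 else 0 := by
        intro j
        have h1 : m (eF i j) = if j < r - 1 then 1 else 0 := by
          rw [← delI_apply, hdel, full_apply]
        rw [h1]
        unfold eF
        split_ifs <;> omega
      have hbi : m i ≤ 1 := by
        have := hb i
        rwa [if_pos hlt] at this
      rcases (by omega : m i = 0 ∨ m i = 1) with h0 | h1
      · refine Finset.mem_insert.2 (Or.inr (Finset.mem_singleton.2 ?_))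
        ext t
        rcases eq_or_ne t i with rfl | ht
        · rw [Finsupp.erase_same]
          exact h0
        · obtain ⟨j, rfl⟩ : ∃ j, eF i j = t :=
            ⟨if t < i then t else t - 1, by unfold eF; split_ifs <;> omega⟩
          rw [Finsupp.erase_ne ht, full_apply]
          exact hval j
      · refine Finset.mem_insert.2 (Or.inl ?_)
        ext t
        rcases eq_or_ne t i with rfl | ht
        · rw [full_apply, if_pos hlt]
          exact h1
        · obtain ⟨j, rfl⟩ : ∃ j, eF i j = t :=
            ⟨if t < i then t else t - 1, by unfold eF; split_ifs <;> omega⟩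
          rw [full_apply]
          exact hval j
    · rfl

/-! ### support and nesting order of a truncation -/

lemma trunc_supp {f : MvPolynomial ℕ ℤ} (hN : NonnegC f) (i k : ℕ) (n : ℕ →₀ ℕ) :
    (truncAt f i k).coeff n ≠ 0 ↔ ∃ m, f.coeff m ≠ 0 ∧ delI i m = n := by
  classical
  rw [trunc_coeff]
  constructor
  · intro h
    obtain ⟨m, hm, hne⟩ := Finset.exists_ne_zero_of_sum_ne_zero h
    split_ifs at hne with hd
    · exact ⟨m, MvPolynomial.mem_support_iff.1 hm, hd⟩
    · exact absurd rfl hne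
  · rintro ⟨m, hm, hd⟩
    have hpos : (0:ℤ) < ∑ m' ∈ f.support,
        (if delI i m' = n then f.coeff m' * 3 ^ (k * m' i) else 0) := by
      refine Finset.sum_pos' (fun m' _ => ?_) ⟨m, MvPolynomial.mem_support_iff.2 hm, ?_⟩
      · split_ifs
        · exact mul_nonneg (hN m') (by positivity)
        · exact le_refl 0
      · rw [if_pos hd]
        exact mul_pos (lt_of_le_of_ne (hN m) (Ne.symm hm)) (by positivity)
    exact hpos.ne'

lemma trunc_nest {f : MvPolynomial ℕ ℤ} (hN : NonnegC f) (i k j j' : ℕ) :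
    NestLe (truncAt f i k) j j' ↔ NestLe f (eF i j) (eF i j') := by
  constructor
  · intro h m hm hmj
    have hmem : delI i m ∈ (truncAt f i k).support :=
      MvPolynomial.mem_support_iff.2
        ((trunc_supp hN i k _).2 ⟨m, MvPolynomial.mem_support_iff.1 hm, rfl⟩)
    have := h _ hmem (by rw [delI_apply]; exact hmj)
    rwa [delI_apply] at this
  · intro h n hn hnj
    obtain ⟨m, hm, rfl⟩ := (trunc_supp hN i k n).1 (MvPolynomial.mem_support_iff.1 hn)
    rw [delI_apply] at hnj ⊢
    exact h m (MvPolynomial.mem_support_iff.2 hm) hnj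

/-! ### a single truncation step -/

lemma step_main (p q : ℕ × MvPolynomial ℕ ℤ × ℕ) (hp : LDP p.1 p.2.1 p.2.2)
    (hq : DirectTrunc p q) :
    LDP q.1 q.2.1 q.2.2 ∧ pairDft q.1 q.2.1 q.2.2 < pairDft p.1 p.2.1 p.2.2 ∧
      ∃ e : ℕ → ℕ, StrictMono e ∧ (∀ j < q.1, e j < p.1) ∧
        ∀ j j', NestLe q.2.1 j j' ↔ NestLe p.2.1 (e j) (e j') := by
  obtain ⟨r, f, Cn⟩ := p
  obtain ⟨r', g', D⟩ := q
  obtain ⟨i, k, hr, hmin, hg, hD⟩ := hq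
  dsimp only at hr hmin hg hD ⊢
  subst hg
  subst hD
  subst hr
  have hL : LDP r' (truncAt f i k) (Cn + 3 * k) := by
    have := trunc_ldp hp i k hmin
    simpa using this
  refine ⟨hL, ?_, eF i, eF_strictMono i, fun j hj => eF_lt hmin.1 (by omega), fun j j' =>
    trunc_nest (good_of_ldp hp).1 i k j j'⟩
  have hA : 0 < f.coeff (full (r' + 1)) := (good_of_ldp hp).2.2.1
  have hB : 0 < f.coeff ((full (r' + 1)).erase i) := min_erase hp i hmin
  have hTL := trunc_lead hp hmin k
  simp only [Nat.add_sub_cancel] at hTL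
  have hAr : (0:ℝ) < ((f.coeff (full (r' + 1)) : ℤ) : ℝ) := by exact_mod_cast hA
  have hBr : (1:ℝ) ≤ ((f.coeff ((full (r' + 1)).erase i) : ℤ) : ℝ) := by exact_mod_cast hB
  have h3k : (0:ℝ) < (3:ℝ) ^ k := by positivity
  have hlog : Real.logb 3 ((f.coeff (full (r' + 1)) : ℤ) : ℝ) + k
      < Real.logb 3 (((f.coeff (full (r' + 1)) * 3 ^ k + f.coeff ((full (r' + 1)).erase i) : ℤ)) : ℝ) := by
    have h1 : Real.logb 3 (((f.coeff (full (r' + 1)) : ℤ) : ℝ) * 3 ^ k)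
        = Real.logb 3 ((f.coeff (full (r' + 1)) : ℤ) : ℝ) + k := by
      rw [Real.logb_mul (ne_of_gt hAr) (ne_of_gt h3k), Real.logb_pow,
        Real.logb_self_eq_one (by norm_num)]
      ring
    have h2 : ((f.coeff (full (r' + 1)) : ℤ) : ℝ) * 3 ^ k
        < (((f.coeff (full (r' + 1)) * 3 ^ k + f.coeff ((full (r' + 1)).erase i) : ℤ)) : ℝ) := by
      push_cast
      linarith
    rw [← h1]
    exact Real.logb_lt_logb (by norm_num) (by positivity) h2
  simp only [pairDft, leadCoeff_eq, hTL]
  push_cast at hlog ⊢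
  linarith

lemma chain_main (p q : ℕ × MvPolynomial ℕ ℤ × ℕ)
    (h : Relation.TransGen DirectTrunc p q) (hp : LDP p.1 p.2.1 p.2.2) :
    LDP q.1 q.2.1 q.2.2 ∧ pairDft q.1 q.2.1 q.2.2 < pairDft p.1 p.2.1 p.2.2 ∧
      ∃ e : ℕ → ℕ, StrictMono e ∧ (∀ j < q.1, e j < p.1) ∧
        ∀ j j', NestLe q.2.1 j j' ↔ NestLe p.2.1 (e j) (e j') := by
  induction h with
  | single h1 => exact step_main _ _ hp h1
  | tail h1 h2 ih =>
    obtain ⟨hl, hd, e1, he1, hb1, hiff1⟩ := ih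
    obtain ⟨hl2, hd2, e2, he2, hb2, hiff2⟩ := step_main _ _ hl h2
    exact ⟨hl2, lt_trans hd2 hd, e1 ∘ e2, he1.comp he2,
      fun j hj => hb1 _ (hb2 j hj), fun j j' => (hiff2 j j').trans (hiff1 _ _)⟩

end T7

/-- A (nonempty) truncation decreases the defect of the pair,
and restricts the nesting order. -/
theorem truncation_dft_lt (r : ℕ) (f : MvPolynomial ℕ ℤ) (C : ℕ) (hf : LDP r f C)
    (r' : ℕ) (g : MvPolynomial ℕ ℤ) (D : ℕ)
    (h : Relation.TransGen DirectTrunc (r, f, C) (r', g, D)) :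
    pairDft r' g D < pairDft r f C ∧
    ∃ e : ℕ → ℕ, StrictMono e ∧ (∀ j < r', e j < r) ∧
      ∀ j j', j < r' → j' < r' → (NestLe g j j' ↔ NestLe f (e j) (e j')) := by
  obtain ⟨hl, hd, e, he, hb, hiff⟩ := T7.chain_main (r, f, C) (r', g, D) h hf
  exact ⟨hd, e, he, hb, fun j j' _ _ => hiff j j'⟩
end

section
/- Let (f,C) be a low-defect pair of degree r, and let p = (k₁,…,k_r) ∈ (ℤ≥0 ∪ {∗})^r be such that the set of variables xᵢ with kᵢ ≠ ∗ is downward closed under the nesting order of f. Let (g,D) denote the 3-substitution of p into (f,C). Then: (1) (g,D) is a truncation of (f,C), hence a low-defect pair; (2) if t is the number of indices i with kᵢ = ∗ and ι : ℤ≥0^t → ℤ≥0^r is the map inserting its arguments into the coordinates of p equal to ∗, then δ_{g,D} = δ_{f,C} ∘ ι. Furthermore, every truncation of (f,C) arises as the 3-substitution of such a tuple p into (f,C). -/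
def cnt (p : ℕ → Option ℕ) (j : ℕ) : ℕ := ((Finset.range j).filter (fun i => p i = none)).card

lemma cnt_succ (p : ℕ → Option ℕ) (j : ℕ) :
    cnt p (j+1) = cnt p j + if p j = none then 1 else 0 := by
  unfold cnt
  rw [Finset.range_add_one, Finset.filter_insert]
  split
  · rw [Finset.card_insert_of_notMem (by simp)]
  · simp

lemma cnt_mono (p : ℕ → Option ℕ) : Monotone (cnt p) := fun a b h =>
  Finset.card_le_card (Finset.filter_subset_filter _ (Finset.range_subset_range.2 h))

lemma cnt_lt (p : ℕ → Option ℕ) {l j : ℕ} (h : l < j) (hl : p l = none) :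
    cnt p l < cnt p j := by
  have h1 : cnt p (l+1) = cnt p l + 1 := by rw [cnt_succ, if_pos hl]
  have h2 := cnt_mono p h
  have := cnt_mono p (show l + 1 ≤ j from h)
  omega

lemma cnt_injOn (p : ℕ → Option ℕ) {a b : ℕ} (ha : p a = none) (hb : p b = none)
    (h : cnt p a = cnt p b) : a = b := by
  rcases lt_trichotomy a b with h' | h' | h'
  · exact absurd h (cnt_lt p h' ha).ne
  · exact h'
  · exact absurd h.symm (cnt_lt p h' hb).ne

lemma cnt_surj (p : ℕ → Option ℕ) (j a : ℕ) (h : a < cnt p j) :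
    ∃ l, l < j ∧ p l = none ∧ cnt p l = a := by
  induction j with
  | zero => simp [cnt] at h
  | succ j ih =>
    rcases lt_or_ge a (cnt p j) with h' | h'
    · obtain ⟨l, h1, h2, h3⟩ := ih h'
      exact ⟨l, by omega, h2, h3⟩
    · have hs := cnt_succ p j
      by_cases hj : p j = none
      · rw [if_pos hj] at hs
        exact ⟨j, by omega, hj, by omega⟩
      · rw [if_neg hj] at hs; omega

open MvPolynomial in
noncomputable def sMap (p : ℕ → Option ℕ) : ℕ → MvPolynomial ℕ ℤ := fun j =>
  match p j with
  | some k => MvPolynomial.C ((3 : ℤ) ^ k)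
  | none => MvPolynomial.X (cnt p j)

lemma subst3_eq (f : MvPolynomial ℕ ℤ) (p : ℕ → Option ℕ) :
    subst3 f p = MvPolynomial.aeval (sMap p) f := rfl

lemma sMap_fixed {p : ℕ → Option ℕ} {j : ℕ} (h : p j ≠ none) :
    sMap p j = MvPolynomial.C ((3:ℤ) ^ (p j).getD 0) := by
  cases hj : p j with
  | none => exact absurd hj h
  | some k => simp [sMap, hj]

lemma sMap_free {p : ℕ → Option ℕ} {j : ℕ} (h : p j = none) :
    sMap p j = MvPolynomial.X (cnt p j) := by simp [sMap, h]

noncomputable def renP (p : ℕ → Option ℕ) (m : ℕ →₀ ℕ) : ℕ →₀ ℕ :=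
  ∑ j ∈ m.support.filter (fun j => p j = none), Finsupp.single (cnt p j) (m j)

def wP (p : ℕ → Option ℕ) (m : ℕ →₀ ℕ) : ℕ := ∑ j ∈ m.support, (p j).getD 0 * m j

lemma prod_monomial_one (S : Finset ℕ) (σ : ℕ → (ℕ →₀ ℕ)) :
    ∏ j ∈ S, (MvPolynomial.monomial (σ j) (1:ℤ)) = MvPolynomial.monomial (∑ j ∈ S, σ j) 1 := by
  induction S using Finset.cons_induction with
  | empty => simp
  | cons a s ha ih =>
    rw [Finset.prod_cons, ih, Finset.sum_cons, MvPolynomial.monomial_mul, one_mul]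

lemma aeval_sMap_monomial (p : ℕ → Option ℕ) (m : ℕ →₀ ℕ) (c : ℤ) :
    MvPolynomial.aeval (sMap p) (MvPolynomial.monomial m c) =
      MvPolynomial.monomial (renP p m) (c * 3 ^ wP p m) := by
  rw [MvPolynomial.aeval_monomial]
  have hsplit := Finset.prod_filter_mul_prod_filter_not m.support (fun j => p j = none)
    (fun j => sMap p j ^ m j)
  have h1 : ∏ j ∈ m.support.filter (fun j => p j = none), sMap p j ^ m j
      = MvPolynomial.monomial (renP p m) 1 := by
    unfold renP
    rw [← prod_monomial_one]
    refine Finset.prod_congr rfl fun j hj => ?_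
    rw [sMap_free (Finset.mem_filter.1 hj).2, MvPolynomial.X_pow_eq_monomial]
  have h2 : ∏ j ∈ m.support.filter (fun j => ¬ p j = none), sMap p j ^ m j
      = MvPolynomial.C ((3:ℤ) ^ wP p m) := by
    have : ∀ j ∈ m.support.filter (fun j => ¬ p j = none),
        sMap p j ^ m j = MvPolynomial.C ((3:ℤ) ^ ((p j).getD 0 * m j)) := by
      intro j hj
      rw [sMap_fixed (Finset.mem_filter.1 hj).2, ← map_pow, ← pow_mul]
    rw [Finset.prod_congr rfl this, ← map_prod, Finset.prod_pow_eq_pow_sum]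
    congr 1
    unfold wP
    rw [Finset.sum_filter_of_ne]
    intro x _ hx
    intro hnone
    simp [hnone] at hx
  rw [Finsupp.prod, ← hsplit, h1, h2]
  rw [MvPolynomial.algebraMap_eq]
  rw [show MvPolynomial.C c * (MvPolynomial.monomial (renP p m) 1 *
      MvPolynomial.C ((3:ℤ) ^ wP p m)) = (MvPolynomial.C c * MvPolynomial.C ((3:ℤ) ^ wP p m)) *
      MvPolynomial.monomial (renP p m) 1 by ring]
  rw [← MvPolynomial.C_mul, MvPolynomial.C_mul_monomial, mul_one]

lemma subst3_sum (f : MvPolynomial ℕ ℤ) (p : ℕ → Option ℕ) :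
    subst3 f p = ∑ m ∈ f.support,
      MvPolynomial.monomial (renP p m) (f.coeff m * 3 ^ wP p m) := by
  rw [subst3_eq]
  conv_lhs => rw [f.as_sum]
  rw [map_sum]
  exact Finset.sum_congr rfl fun m _ => aeval_sMap_monomial p m _

lemma coeff_subst3 (f : MvPolynomial ℕ ℤ) (p : ℕ → Option ℕ) (m' : ℕ →₀ ℕ) :
    (subst3 f p).coeff m' =
      ∑ m ∈ f.support, if renP p m = m' then f.coeff m * 3 ^ wP p m else 0 := by
  rw [subst3_sum, MvPolynomial.coeff_sum]
  exact Finset.sum_congr rfl fun m _ => by rw [MvPolynomial.coeff_monomial]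

lemma support_subst3_sub (f : MvPolynomial ℕ ℤ) (p : ℕ → Option ℕ) {m' : ℕ →₀ ℕ}
    (h : m' ∈ (subst3 f p).support) : ∃ m ∈ f.support, renP p m = m' := by
  by_contra hc
  push_neg at hc
  apply MvPolynomial.mem_support_iff.1 h
  rw [coeff_subst3]
  apply Finset.sum_eq_zero
  intro m hm
  simp [hc m hm]

def Pos (f : MvPolynomial ℕ ℤ) : Prop := ∀ m ∈ f.support, 0 < f.coeff m

def Bdd (r : ℕ) (f : MvPolynomial ℕ ℤ) : Prop := ∀ m ∈ f.support, ∀ j, r ≤ j → m j = 0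

lemma subst3_coeff_nonneg {f : MvPolynomial ℕ ℤ} (hf : Pos f) (p : ℕ → Option ℕ)
    (m' : ℕ →₀ ℕ) : 0 ≤ (subst3 f p).coeff m' := by
  rw [coeff_subst3]
  apply Finset.sum_nonneg
  intro m hm
  split
  · exact mul_nonneg (hf m hm).le (by positivity)
  · exact le_refl 0

lemma pos_subst3 {f : MvPolynomial ℕ ℤ} (hf : Pos f) (p : ℕ → Option ℕ) :
    Pos (subst3 f p) := fun m' hm' =>
  (subst3_coeff_nonneg hf p m').lt_of_ne (Ne.symm (MvPolynomial.mem_support_iff.1 hm'))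

lemma renP_mem_support {f : MvPolynomial ℕ ℤ} (hf : Pos f) (p : ℕ → Option ℕ)
    {m : ℕ →₀ ℕ} (hm : m ∈ f.support) : renP p m ∈ (subst3 f p).support := by
  rw [MvPolynomial.mem_support_iff, coeff_subst3]
  have : 0 < ∑ m'' ∈ f.support,
      if renP p m'' = renP p m then f.coeff m'' * 3 ^ wP p m'' else 0 := by
    apply Finset.sum_pos'
    · intro m'' hm''
      split
      · exact mul_nonneg (hf m'' hm'').le (by positivity)
      · exact le_refl 0
    · exact ⟨m, hm, by rw [if_pos rfl]; exact mul_pos (hf m hm) (by positivity)⟩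
  exact this.ne'

lemma renP_apply {p : ℕ → Option ℕ} {j : ℕ} (hj : p j = none) (m : ℕ →₀ ℕ) :
    renP p m (cnt p j) = m j := by
  unfold renP
  rw [Finsupp.finset_sum_apply]
  rcases Finset.decidableMem j (m.support.filter (fun j => p j = none)) with hmem | hmem
  · rw [Finset.sum_eq_zero]
    · have : m j = 0 := by
        by_contra h
        exact hmem (Finset.mem_filter.2 ⟨Finsupp.mem_support_iff.2 h, hj⟩)
      rw [this]
    · intro j' hj'
      have hj' := Finset.mem_filter.1 hj'
      rw [Finsupp.single_apply, if_neg]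
      intro hc
      have := cnt_injOn p hj'.2 hj hc
      subst this
      exact hmem (Finset.mem_filter.2 hj')
  · rw [Finset.sum_eq_single j]
    · rw [Finsupp.single_apply, if_pos rfl]
    · intro j' hj' hne
      have hj' := Finset.mem_filter.1 hj'
      rw [Finsupp.single_apply, if_neg]
      intro hc
      exact hne (cnt_injOn p hj'.2 hj hc)
    · intro h; exact absurd hmem h
  
lemma renP_apply_ne_zero {p : ℕ → Option ℕ} {m : ℕ →₀ ℕ} {a : ℕ}
    (h : renP p m a ≠ 0) : ∃ j, p j = none ∧ cnt p j = a ∧ m j ≠ 0 := by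
  by_contra hc
  push_neg at hc
  apply h
  unfold renP
  rw [Finsupp.finset_sum_apply]
  apply Finset.sum_eq_zero
  intro j hj
  have hj := Finset.mem_filter.1 hj
  rw [Finsupp.single_apply]
  split
  · exact absurd (Finsupp.mem_support_iff.1 hj.1) (by
      next h' => exact fun hne => hne (hc j hj.2 h'))
  · rfl

lemma nestle_subst3_up {f : MvPolynomial ℕ ℤ} {p : ℕ → Option ℕ} (hf : Pos f) {a b : ℕ}
    (ha : p a = none) (hb : p b = none)
    (h : NestLe (subst3 f p) (cnt p a) (cnt p b)) : NestLe f a b := by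
  intro m hm hma
  have hmem := renP_mem_support hf p hm
  have := h _ hmem (by rw [renP_apply ha]; exact hma)
  rwa [renP_apply hb] at this

lemma nestle_subst3_down {f : MvPolynomial ℕ ℤ} {p : ℕ → Option ℕ} {a b : ℕ}
    (ha : p a = none) (hb : p b = none) (h : NestLe f a b) :
    NestLe (subst3 f p) (cnt p a) (cnt p b) := by
  intro m' hm' hma
  obtain ⟨m, hm, rfl⟩ := support_subst3_sub f p hm'
  rw [renP_apply ha] at hma
  rw [renP_apply hb]
  exact h m hm hma

lemma bdd_subst3 {r : ℕ} {f : MvPolynomial ℕ ℤ} (hb : Bdd r f) (p : ℕ → Option ℕ) :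
    Bdd (cnt p r) (subst3 f p) := by
  intro m' hm' a ha
  obtain ⟨m, hm, rfl⟩ := support_subst3_sub f p hm'
  by_contra h
  obtain ⟨j, hjn, hjc, hjm⟩ := renP_apply_ne_zero h
  have hjr : j < r := by
    by_contra hjr
    exact hjm (hb m hm j (le_of_not_gt hjr))
  have := cnt_lt p hjr hjn
  omega

lemma aeval_aeval' (φ ψ : ℕ → MvPolynomial ℕ ℤ) (f : MvPolynomial ℕ ℤ) :
    MvPolynomial.aeval ψ (MvPolynomial.aeval φ f) =
      MvPolynomial.aeval (fun j => MvPolynomial.aeval ψ (φ j)) f := by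
  induction f using MvPolynomial.induction_on with
  | C a => simp
  | add p q hp hq => rw [map_add, map_add, map_add, hp, hq]
  | mul_X p n hp => rw [map_mul, map_mul, map_mul, hp, MvPolynomial.aeval_X, MvPolynomial.aeval_X]

def compP (p₁ p₂ : ℕ → Option ℕ) : ℕ → Option ℕ := fun j =>
  match p₁ j with
  | some k => some k
  | none => p₂ (cnt p₁ j)

lemma compP_some {p₁ p₂ : ℕ → Option ℕ} {j k : ℕ} (h : p₁ j = some k) :
    compP p₁ p₂ j = some k := by simp [compP, h]

lemma compP_none {p₁ p₂ : ℕ → Option ℕ} {j : ℕ} (h : p₁ j = none) :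
    compP p₁ p₂ j = p₂ (cnt p₁ j) := by simp [compP, h]

lemma cnt_comp (p₁ p₂ : ℕ → Option ℕ) (j : ℕ) :
    cnt (compP p₁ p₂) j = cnt p₂ (cnt p₁ j) := by
  induction j with
  | zero => simp [cnt]
  | succ j ih =>
    rw [cnt_succ, ih]
    cases h : p₁ j with
    | some k =>
      rw [compP_some h]
      have : cnt p₁ (j+1) = cnt p₁ j := by rw [cnt_succ, if_neg (by simp [h])]; omega
      rw [this]
      simp
    | none =>
      rw [compP_none h]
      have : cnt p₁ (j+1) = cnt p₁ j + 1 := by rw [cnt_succ, if_pos h]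
      rw [this, cnt_succ]

lemma sum_getD_comp (p₁ p₂ : ℕ → Option ℕ) (r : ℕ) :
    ∑ j ∈ Finset.range r, ((compP p₁ p₂ j).getD 0) =
      (∑ j ∈ Finset.range r, ((p₁ j).getD 0)) +
        ∑ a ∈ Finset.range (cnt p₁ r), ((p₂ a).getD 0) := by
  induction r with
  | zero => simp [cnt]
  | succ r ih =>
    rw [Finset.sum_range_succ, Finset.sum_range_succ, ih]
    cases h : p₁ r with
    | some k =>
      rw [compP_some h]
      have : cnt p₁ (r+1) = cnt p₁ r := by rw [cnt_succ, if_neg (by simp [h])]; omega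
      rw [this]
      omega
    | none =>
      rw [compP_none h]
      have : cnt p₁ (r+1) = cnt p₁ r + 1 := by rw [cnt_succ, if_pos h]
      rw [this, Finset.sum_range_succ]
      simp only [Option.getD_none]
      omega

lemma sMap_comp (p₁ p₂ : ℕ → Option ℕ) :
    (fun j => MvPolynomial.aeval (sMap p₂) (sMap p₁ j)) = sMap (compP p₁ p₂) := by
  funext j
  cases h1 : p₁ j with
  | some k =>
    rw [sMap_fixed (by simp [h1]), MvPolynomial.aeval_C,
      sMap_fixed (by simp [compP_some (p₂ := p₂) h1])]
    simp [compP_some (p₂ := p₂) h1, h1]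
  | none =>
    rw [sMap_free h1, MvPolynomial.aeval_X]
    cases h2 : p₂ (cnt p₁ j) with
    | some k =>
      rw [sMap_fixed (by simp [h2]), sMap_fixed (by rw [compP_none h1]; simp [h2])]
      rw [compP_none h1, h2]
    | none =>
      rw [sMap_free h2, sMap_free (by rw [compP_none h1, h2]), cnt_comp]

lemma subst3_comp (f : MvPolynomial ℕ ℤ) (p₁ p₂ : ℕ → Option ℕ) :
    subst3 (subst3 f p₁) p₂ = subst3 f (compP p₁ p₂) := by
  rw [subst3_eq, subst3_eq, subst3_eq, aeval_aeval', sMap_comp]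

def sgl (i k : ℕ) : ℕ → Option ℕ := fun j => if j = i then some k else none

lemma cnt_sgl (i k j : ℕ) : cnt (sgl i k) j = if j ≤ i then j else j - 1 := by
  unfold cnt
  split
  · next h =>
    rw [Finset.filter_true_of_mem, Finset.card_range]
    intro l hl
    have : l ≠ i := by rw [Finset.mem_range] at hl; omega
    simp [sgl, this]
  · next h =>
    have he : (Finset.range j).filter (fun l => sgl i k l = none) = (Finset.range j).erase i := by
      ext l
      rw [Finset.mem_filter, Finset.mem_erase, Finset.mem_range]
      simp only [sgl]
      constructor
      · rintro ⟨h1, h2⟩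
        refine ⟨?_, h1⟩
        intro hc
        simp [hc] at h2
      · rintro ⟨h1, h2⟩
        exact ⟨h2, by simp [h1]⟩
    rw [he, Finset.card_erase_of_mem (by rw [Finset.mem_range]; omega), Finset.card_range]

lemma truncAt_eq (f : MvPolynomial ℕ ℤ) (i k : ℕ) : truncAt f i k = subst3 f (sgl i k) := by
  rw [truncAt, subst3_eq]
  have hfun : (fun j => if j < i then MvPolynomial.X (R := ℤ) j
      else if j = i then MvPolynomial.C ((3 : ℤ) ^ k) else MvPolynomial.X (j - 1))
      = sMap (sgl i k) := by
    funext j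
    rcases lt_trichotomy j i with h | h | h
    · rw [if_pos h, sMap_free (by simp [sgl]; omega), cnt_sgl, if_pos (by omega)]
    · subst h
      rw [if_neg (by omega), if_pos rfl, sMap_fixed (by simp [sgl])]
      simp [sgl]
    · rw [if_neg (by omega), if_neg (by omega), sMap_free (by simp [sgl]; omega),
        cnt_sgl, if_neg (by omega)]
  rw [hfun]

lemma cnt_all_none {p : ℕ → Option ℕ} (h : ∀ j, p j = none) (j : ℕ) : cnt p j = j := by
  unfold cnt
  rw [Finset.filter_true_of_mem (fun x _ => h x), Finset.card_range]

lemma subst3_none (f : MvPolynomial ℕ ℤ) (p : ℕ → Option ℕ) (h : ∀ j, p j = none) :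
    subst3 f p = f := by
  rw [subst3_eq]
  have : sMap p = MvPolynomial.X := by
    funext j
    rw [sMap_free (h j), cnt_all_none h]
  rw [this, MvPolynomial.aeval_X_left_apply]

lemma eval_aeval' (v : ℕ → ℤ) (φ : ℕ → MvPolynomial ℕ ℤ) (f : MvPolynomial ℕ ℤ) :
    MvPolynomial.eval v (MvPolynomial.aeval φ f) =
      MvPolynomial.eval (fun j => MvPolynomial.eval v (φ j)) f := by
  induction f using MvPolynomial.induction_on with
  | C a => simp
  | add p q hp hq => rw [map_add, map_add, map_add, hp, hq]
  | mul_X p n hp =>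
    rw [map_mul, map_mul, map_mul, hp, MvPolynomial.aeval_X, MvPolynomial.eval_X]

lemma eval3_subst3 (f : MvPolynomial ℕ ℤ) (p : ℕ → Option ℕ) (r : ℕ)
    (hp : ∀ j, r ≤ j → p j = none) (ℓ : ℕ → ℕ) :
    eval3 (cnt p r) (subst3 f p) ℓ = eval3 r f (iotaMap p ℓ) := by
  rw [eval3, eval3, subst3_eq, eval_aeval']
  have hfun : (fun j => MvPolynomial.eval (fun i => if i < cnt p r then (3:ℤ) ^ ℓ i else 1)
      (sMap p j)) = fun i => if i < r then (3:ℤ) ^ iotaMap p ℓ i else 1 := by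
    funext j
    by_cases hj : j < r
    · cases h : p j with
      | some k =>
        rw [sMap_fixed (by simp [h]), MvPolynomial.eval_C, if_pos hj]
        have : iotaMap p ℓ j = k := by simp [iotaMap, h]
        rw [this, h]
        rfl
      | none =>
        have hcnt : cnt p j < cnt p r := cnt_lt p hj h
        rw [sMap_free h, MvPolynomial.eval_X, if_pos hcnt, if_pos hj]
        have : iotaMap p ℓ j = ℓ (cnt p j) := by
          simp [iotaMap, h]
          rfl
        rw [this]
    · have h : p j = none := hp j (le_of_not_gt hj)
      have hcnt : ¬ cnt p j < cnt p r := not_lt.2 (cnt_mono p (le_of_not_gt hj))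
      rw [sMap_free h, MvPolynomial.eval_X, if_neg hcnt, if_neg hj]
  rw [hfun]

lemma sum_iota (p : ℕ → Option ℕ) (r : ℕ) (ℓ : ℕ → ℕ) :
    ∑ j ∈ Finset.range r, (iotaMap p ℓ j) =
      (∑ j ∈ Finset.range r, (p j).getD 0) + ∑ a ∈ Finset.range (cnt p r), ℓ a := by
  induction r with
  | zero => simp [cnt]
  | succ r ih =>
    rw [Finset.sum_range_succ, Finset.sum_range_succ, ih]
    cases h : p r with
    | some k =>
      have h1 : iotaMap p ℓ r = k := by simp [iotaMap, h]
      have h2 : cnt p (r+1) = cnt p r := by rw [cnt_succ, if_neg (by simp [h])]; omega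
      rw [h1, h2]
      simp only [h, Option.getD_some]
      omega
    | none =>
      have h1 : iotaMap p ℓ r = ℓ (cnt p r) := by simp [iotaMap, h]; rfl
      have h2 : cnt p (r+1) = cnt p r + 1 := by rw [cnt_succ, if_pos h]
      rw [h1, h2, Finset.sum_range_succ]
      simp only [h, Option.getD_none]
      omega

lemma part2 (f : MvPolynomial ℕ ℤ) (p : ℕ → Option ℕ) (r C : ℕ)
    (hp : ∀ j, r ≤ j → p j = none) (ℓ : ℕ → ℕ) :
    dftF (cnt p r) (subst3 f p)
        (C + 3 * ∑ i ∈ Finset.range r, (p i).getD 0) ℓ = dftF r f C (iotaMap p ℓ) := by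
  unfold dftF
  rw [eval3_subst3 f p r hp ℓ]
  have hs := congrArg (fun n : ℕ => (n : ℝ)) (sum_iota p r ℓ)
  push_cast at hs
  push_cast
  linarith

def Occ (r : ℕ) (f : MvPolynomial ℕ ℤ) : Prop := ∀ i, i < r → ∃ m ∈ f.support, m i ≠ 0

def AntiS (r : ℕ) (f : MvPolynomial ℕ ℤ) : Prop :=
  ∀ a b, a < r → b < r → NestLe f a b → NestLe f b a → a = b

lemma coeff_mul_split (p q : MvPolynomial ℕ ℤ) (r₁ : ℕ)
    (hp : ∀ m ∈ p.support, ∀ j, r₁ ≤ j → m j = 0)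
    (hq : ∀ m ∈ q.support, ∀ j, j < r₁ → m j = 0) (m : ℕ →₀ ℕ) :
    (p * q).coeff m =
      p.coeff (m.filter (fun j => j < r₁)) * q.coeff (m.filter (fun j => ¬ j < r₁)) := by
  classical
  rw [MvPolynomial.coeff_mul]
  have hmem : (m.filter (fun j => j < r₁), m.filter (fun j => ¬ j < r₁))
      ∈ Finset.HasAntidiagonal.antidiagonal m := by
    rw [Finset.HasAntidiagonal.mem_antidiagonal]
    exact Finsupp.filter_pos_add_filter_neg m _
  rw [Finset.sum_eq_single (m.filter (fun j => j < r₁), m.filter (fun j => ¬ j < r₁))]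
  · rintro ⟨x, y⟩ hxy hne
    rw [Finset.HasAntidiagonal.mem_antidiagonal] at hxy
    by_cases hx : p.coeff x = 0
    · rw [hx, zero_mul]
    by_cases hy : q.coeff y = 0
    · rw [hy, mul_zero]
    exfalso
    apply hne
    have hxs := hp x (MvPolynomial.mem_support_iff.2 hx)
    have hys := hq y (MvPolynomial.mem_support_iff.2 hy)
    have hmxy : ∀ j, x j + y j = m j := fun j => by
      rw [← hxy]; rfl
    have hxeq : x = m.filter (fun j => j < r₁) := by
      ext j
      rw [Finsupp.filter_apply]
      by_cases hj : j < r₁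
      · rw [if_pos hj, ← hmxy j, hys j hj]
        omega
      · rw [if_neg hj, hxs j (le_of_not_gt hj)]
    have hyeq : y = m.filter (fun j => ¬ j < r₁) := by
      ext j
      rw [Finsupp.filter_apply]
      by_cases hj : j < r₁
      · rw [if_neg (by simpa using hj), hys j hj]
      · rw [if_pos hj, ← hmxy j, hxs j (le_of_not_gt hj)]
        omega
    rw [hxeq, hyeq]
  · intro h
    exact absurd hmem h

lemma LDP_struct {r : ℕ} {f : MvPolynomial ℕ ℤ} {C : ℕ} (h : LDP r f C) :
    Pos f ∧ Bdd r f ∧ (0 : ℕ →₀ ℕ) ∈ f.support ∧ Occ r f ∧ AntiS r f := by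
  classical
  induction h with
  | const k C hk hC =>
    have hkz : ((k : ℤ)) ≠ 0 := by exact_mod_cast hk.ne'
    have hmem : ∀ m ∈ (MvPolynomial.C (σ := ℕ) (k : ℤ)).support, m = 0 := by
      intro m hm
      rw [MvPolynomial.mem_support_iff, MvPolynomial.coeff_C] at hm
      by_contra hne
      rw [if_neg (by exact fun hc => hne hc.symm)] at hm
      exact hm rfl
    refine ⟨?_, ?_, ?_, ?_, ?_⟩
    · intro m hm
      rw [hmem m hm, MvPolynomial.coeff_C, if_pos rfl]
      exact_mod_cast hk
    · intro m hm j _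
      rw [hmem m hm]
      rfl
    · rw [MvPolynomial.mem_support_iff, MvPolynomial.coeff_C, if_pos rfl]
      exact hkz
    · intro i hi; omega
    · intro a b ha _ _ _; omega
  | @mul r₁ r₂ f₁ f₂ C₁ C₂ h₁ h₂ ih₁ ih₂ =>
    obtain ⟨P1, B1, c1, O1, A1⟩ := ih₁
    obtain ⟨P2, B2, c2, O2, A2⟩ := ih₂
    set F₂ := MvPolynomial.rename (· + r₁) f₂ with hF₂
    set F := f₁ * F₂ with hF
    have hinj : Function.Injective (· + r₁ : ℕ → ℕ) := fun a b hab => by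
      simpa using hab
    have hsupF₂ : F₂.support = f₂.support.image (Finsupp.mapDomain (· + r₁)) :=
      MvPolynomial.support_rename_of_injective hinj
    have hmapply : ∀ (d : ℕ →₀ ℕ) (j : ℕ), r₁ ≤ j →
        Finsupp.mapDomain (· + r₁) d j = d (j - r₁) := by
      intro d j hj
      have hj2 : j = (j - r₁) + r₁ := by omega
      conv_lhs => rw [hj2]
      rw [Finsupp.mapDomain_apply hinj]
    have hmlow : ∀ (d : ℕ →₀ ℕ) (j : ℕ), j < r₁ → Finsupp.mapDomain (· + r₁) d j = 0 := by
      intro d j hj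
      apply Finsupp.mapDomain_notin_range
      rintro ⟨a, ha⟩
      simp at ha
      omega
    have PF₂ : Pos F₂ := by
      intro m' hm'
      rw [hsupF₂] at hm'
      obtain ⟨d, hd, rfl⟩ := Finset.mem_image.1 hm'
      rw [hF₂, MvPolynomial.coeff_rename_mapDomain _ hinj]
      exact P2 d hd
    have loF₂ : ∀ m' ∈ F₂.support, ∀ j, j < r₁ → m' j = 0 := by
      intro m' hm' j hj
      rw [hsupF₂] at hm'
      obtain ⟨d, hd, rfl⟩ := Finset.mem_image.1 hm'
      exact hmlow d j hj
    have hiF₂ : ∀ m' ∈ F₂.support, ∀ j, r₁ + r₂ ≤ j → m' j = 0 := by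
      intro m' hm' j hj
      rw [hsupF₂] at hm'
      obtain ⟨d, hd, rfl⟩ := Finset.mem_image.1 hm'
      rw [hmapply d j (by omega)]
      exact B2 d hd _ (by omega)
    have c2' : (0 : ℕ →₀ ℕ) ∈ F₂.support := by
      rw [hsupF₂]
      exact Finset.mem_image.2 ⟨0, c2, Finsupp.mapDomain_zero⟩
    have O2' : ∀ i, r₁ ≤ i → i < r₁ + r₂ → ∃ m' ∈ F₂.support, m' i ≠ 0 := by
      intro i hi1 hi2
      obtain ⟨d, hd, hdi⟩ := O2 (i - r₁) (by omega)
      refine ⟨Finsupp.mapDomain (· + r₁) d, ?_, ?_⟩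
      · rw [hsupF₂]; exact Finset.mem_image.2 ⟨d, hd, rfl⟩
      · rw [hmapply d i hi1]; exact hdi
    have hsplit : ∀ m : ℕ →₀ ℕ, F.coeff m =
        f₁.coeff (m.filter (fun j => j < r₁)) * F₂.coeff (m.filter (fun j => ¬ j < r₁)) :=
      coeff_mul_split f₁ F₂ r₁ B1 loF₂
    have hprod : ∀ m₁ ∈ f₁.support, ∀ m₂ ∈ F₂.support,
        F.coeff (m₁ + m₂) = f₁.coeff m₁ * F₂.coeff m₂ := by
      intro m₁ hm₁ m₂ hm₂
      rw [hsplit]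
      have e1 : (m₁ + m₂).filter (fun j => j < r₁) = m₁ := by
        ext j
        rw [Finsupp.filter_apply]
        by_cases hj : j < r₁
        · rw [if_pos hj, Finsupp.add_apply, loF₂ m₂ hm₂ j hj, add_zero]
        · rw [if_neg hj, B1 m₁ hm₁ j (le_of_not_gt hj)]
      have e2 : (m₁ + m₂).filter (fun j => ¬ j < r₁) = m₂ := by
        ext j
        rw [Finsupp.filter_apply]
        by_cases hj : j < r₁
        · rw [if_neg (by simpa using hj), loF₂ m₂ hm₂ j hj]
        · rw [if_pos hj, Finsupp.add_apply, B1 m₁ hm₁ j (le_of_not_gt hj), zero_add]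
      rw [e1, e2]
    have hprodmem : ∀ m₁ ∈ f₁.support, ∀ m₂ ∈ F₂.support, (m₁ + m₂) ∈ F.support := by
      intro m₁ hm₁ m₂ hm₂
      rw [MvPolynomial.mem_support_iff, hprod m₁ hm₁ m₂ hm₂]
      exact mul_ne_zero (P1 _ hm₁).ne' (PF₂ _ hm₂).ne'
    have hmem_left : ∀ m₁ ∈ f₁.support, m₁ ∈ F.support := fun m₁ h => by
      have := hprodmem m₁ h 0 c2'
      rwa [add_zero] at this
    have hmem_right : ∀ m₂ ∈ F₂.support, m₂ ∈ F.support := fun m₂ h => by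
      have := hprodmem 0 c1 m₂ h
      rwa [zero_add] at this
    have hmemF : ∀ m ∈ F.support, (m.filter (fun j => j < r₁)) ∈ f₁.support ∧
        (m.filter (fun j => ¬ j < r₁)) ∈ F₂.support ∧
        m = m.filter (fun j => j < r₁) + m.filter (fun j => ¬ j < r₁) := by
      intro m hm
      rw [MvPolynomial.mem_support_iff, hsplit] at hm
      exact ⟨MvPolynomial.mem_support_iff.2 fun hc => hm (by rw [hc, zero_mul]),
        MvPolynomial.mem_support_iff.2 fun hc => hm (by rw [hc, mul_zero]),
        (Finsupp.filter_pos_add_filter_neg m _).symm⟩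
    refine ⟨?_, ?_, ?_, ?_, ?_⟩
    · intro m hm
      obtain ⟨h1, h2, _⟩ := hmemF m hm
      rw [hsplit]
      exact mul_pos (P1 _ h1) (PF₂ _ h2)
    · intro m hm j hj
      obtain ⟨h1, h2, he⟩ := hmemF m hm
      rw [he, Finsupp.add_apply, B1 _ h1 j (by omega), hiF₂ _ h2 j hj]
    · have := hprodmem 0 c1 0 c2'
      rwa [add_zero] at this
    · intro i hi
      by_cases hir : i < r₁
      · obtain ⟨m₁, hm₁, hne⟩ := O1 i hir
        exact ⟨m₁, hmem_left m₁ hm₁, hne⟩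
      · obtain ⟨m₂, hm₂, hne⟩ := O2' i (le_of_not_gt hir) hi
        exact ⟨m₂, hmem_right m₂ hm₂, hne⟩
    · have nest_left : ∀ a b, NestLe F a b → NestLe f₁ a b := by
        intro a b hn m₁ hm₁ hma
        exact hn m₁ (hmem_left m₁ hm₁) hma
      have nest_right : ∀ a b, r₁ ≤ a → r₁ ≤ b → NestLe F a b →
          NestLe f₂ (a - r₁) (b - r₁) := by
        intro a b ha hb hn d hd hda
        have hm' : Finsupp.mapDomain (· + r₁) d ∈ F₂.support := by
          rw [hsupF₂]; exact Finset.mem_image.2 ⟨d, hd, rfl⟩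
        have h1 : Finsupp.mapDomain (· + r₁) d a ≠ 0 := by
          rw [hmapply d a ha]; exact hda
        have h2 := hn _ (hmem_right _ hm') h1
        rwa [hmapply d b hb] at h2
      have refute_lr : ∀ a b, a < r₁ → r₁ ≤ b → NestLe F a b → False := by
        intro a b ha hb hn
        obtain ⟨m₁, hm₁, hne⟩ := O1 a ha
        exact (hn m₁ (hmem_left m₁ hm₁) hne) (B1 m₁ hm₁ b hb)
      have refute_rl : ∀ a b, r₁ ≤ a → a < r₁ + r₂ → b < r₁ → NestLe F a b → False := by
        intro a b ha ha2 hb hn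
        obtain ⟨m₂, hm₂, hne⟩ := O2' a ha ha2
        exact (hn m₂ (hmem_right m₂ hm₂) hne) (loF₂ m₂ hm₂ b hb)
      intro a b ha hb hab hba
      by_cases har : a < r₁ <;> by_cases hbr : b < r₁
      · exact A1 a b har hbr (nest_left a b hab) (nest_left b a hba)
      · exact (refute_lr a b har (le_of_not_gt hbr) hab).elim
      · exact (refute_rl a b (le_of_not_gt har) ha hbr hab).elim
      · have := A2 (a - r₁) (b - r₁) (by omega) (by omega)
          (nest_right a b (le_of_not_gt har) (le_of_not_gt hbr) hab)
          (nest_right b a (le_of_not_gt hbr) (le_of_not_gt har) hba)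
        omega
  | @step r' f' C' c D hc hD h ih =>
    obtain ⟨P, B, c0, O, A⟩ := ih
    set F := f' * MvPolynomial.X r' + MvPolynomial.C (c : ℤ) with hF
    have hco : ∀ m : ℕ →₀ ℕ, F.coeff m =
        (if r' ∈ m.support then f'.coeff (m - Finsupp.single r' 1) else 0)
          + (if m = 0 then (c : ℤ) else 0) := by
      intro m
      rw [hF, MvPolynomial.coeff_add, MvPolynomial.coeff_mul_X', MvPolynomial.coeff_C]
      congr 1
      by_cases hm : m = 0 <;> simp [hm, eq_comm]
    have hmem_add : ∀ m₀ ∈ f'.support, (m₀ + Finsupp.single r' 1) ∈ F.support ∧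
        F.coeff (m₀ + Finsupp.single r' 1) = f'.coeff m₀ := by
      intro m₀ hm₀
      have hval : ((m₀ + Finsupp.single r' 1 : ℕ →₀ ℕ)) r' ≠ 0 := by
        rw [Finsupp.add_apply, Finsupp.single_apply, if_pos rfl]
        omega
      have hr : r' ∈ (m₀ + Finsupp.single r' 1).support := Finsupp.mem_support_iff.2 hval
      have hne0 : m₀ + Finsupp.single r' 1 ≠ 0 := by
        intro hc0
        rw [hc0] at hr
        simp at hr
      have hsub : m₀ + Finsupp.single r' 1 - Finsupp.single r' 1 = m₀ :=
        add_tsub_cancel_right m₀ _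
      have hcoeff : F.coeff (m₀ + Finsupp.single r' 1) = f'.coeff m₀ := by
        rw [hco, if_pos hr, hsub, if_neg hne0, add_zero]
      exact ⟨MvPolynomial.mem_support_iff.2 (by rw [hcoeff]; exact (P _ hm₀).ne'), hcoeff⟩
    have hchar : ∀ m ∈ F.support, m = 0 ∨ (m r' ≠ 0 ∧ (m - Finsupp.single r' 1) ∈ f'.support ∧
        m = (m - Finsupp.single r' 1) + Finsupp.single r' 1) := by
      intro m hm
      by_cases hmr : m r' = 0
      · left
        by_contra hne
        apply MvPolynomial.mem_support_iff.1 hm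
        rw [hco, if_neg (by simp [Finsupp.mem_support_iff, hmr]), if_neg hne, add_zero]
      · right
        have hne0 : m ≠ 0 := fun hc0 => hmr (by rw [hc0]; rfl)
        refine ⟨hmr, ?_, ?_⟩
        · rw [MvPolynomial.mem_support_iff]
          intro hz
          apply MvPolynomial.mem_support_iff.1 hm
          rw [hco, if_pos (Finsupp.mem_support_iff.2 hmr), hz, if_neg hne0, add_zero]
        · rw [tsub_add_cancel_of_le]
          rw [Finsupp.single_le_iff]
          omega
    refine ⟨?_, ?_, ?_, ?_, ?_⟩
    · intro m hm
      rcases hchar m hm with rfl | ⟨hmr, hmem, hmeq⟩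
      · rw [hco, if_neg (by simp), if_pos rfl, zero_add]
        exact_mod_cast hc
      · rw [hco, if_pos (Finsupp.mem_support_iff.2 hmr),
          if_neg (fun hc0 => hmr (by rw [hc0]; rfl)), add_zero]
        exact P _ hmem
    · intro m hm j hj
      rcases hchar m hm with rfl | ⟨hmr, hmem, hmeq⟩
      · rfl
      · rw [hmeq, Finsupp.add_apply, B _ hmem j (by omega), Finsupp.single_apply,
          if_neg (by omega)]
        rfl
    · rw [MvPolynomial.mem_support_iff, hco, if_neg (by simp), if_pos rfl, zero_add]
      exact_mod_cast hc.ne'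
    · intro i hi
      by_cases hir : i < r'
      · obtain ⟨m₀, hm₀, hne⟩ := O i hir
        refine ⟨m₀ + Finsupp.single r' 1, (hmem_add m₀ hm₀).1, ?_⟩
        rw [Finsupp.add_apply, Finsupp.single_apply, if_neg (by omega)]
        simpa using hne
      · have hieq : i = r' := by omega
        subst hieq
        refine ⟨0 + Finsupp.single i 1, (hmem_add 0 c0).1, ?_⟩
        rw [Finsupp.add_apply, Finsupp.single_apply, if_pos rfl]
        simp
    · have nest_down : ∀ a b, a < r' → b < r' → NestLe F a b → NestLe f' a b := by
        intro a b ha hb hn m₀ hm₀ hma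
        have h1 := hn (m₀ + Finsupp.single r' 1) (hmem_add m₀ hm₀).1 (by
          rw [Finsupp.add_apply, Finsupp.single_apply, if_neg (by omega), add_zero]
          exact hma)
        rwa [Finsupp.add_apply, Finsupp.single_apply, if_neg (by omega), add_zero] at h1
      have refute : ∀ b, b < r' → NestLe F r' b → False := by
        intro b hb hn
        have hmem := (hmem_add 0 c0).1
        rw [zero_add] at hmem
        have h1 := hn _ hmem (by rw [Finsupp.single_apply, if_pos rfl]; omega)
        rw [Finsupp.single_apply, if_neg (by omega)] at h1
        exact h1 rfl
      intro a b ha hb hab hba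
      by_cases har : a < r' <;> by_cases hbr : b < r'
      · exact A a b har hbr (nest_down a b har hbr hab) (nest_down b a hbr har hba)
      · have hbeq : b = r' := by omega
        subst hbeq
        exact (refute a har hba).elim
      · have haeq : a = r' := by omega
        subst haeq
        exact (refute b hbr hab).elim
      · omega

lemma sum_sgl_getD (i k n : ℕ) (h : i < n) :
    ∑ x ∈ Finset.range n, ((sgl i k x).getD 0) = k := by
  have h1 : ∀ x ∈ Finset.range n, ((sgl i k x).getD 0) = if x = i then k else 0 := by
    intro x _
    by_cases hx : x = i <;> simp [sgl, hx]
  rw [Finset.sum_congr rfl h1, Finset.sum_ite_eq' (Finset.range n) i (fun _ => k),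
    if_pos (Finset.mem_range.2 h)]

lemma sgl_lift (i k a : ℕ) : sgl i k (if a < i then a else a + 1) = none := by
  by_cases h : a < i
  · rw [if_pos h]
    show (if a = i then some k else none) = none
    rw [if_neg (by omega)]
  · rw [if_neg h]
    show (if a + 1 = i then some k else none) = none
    rw [if_neg (by omega)]

lemma cnt_sgl_lift (i k a : ℕ) : cnt (sgl i k) (if a < i then a else a + 1) = a := by
  by_cases h : a < i
  · rw [if_pos h, cnt_sgl, if_pos (by omega)]
  · rw [if_neg h, cnt_sgl, if_neg (by omega)]
    omega

lemma part1 (r : ℕ) : ∀ (f : MvPolynomial ℕ ℤ) (C : ℕ) (p : ℕ → Option ℕ),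
    Pos f → Bdd r f →
    (∀ j, r ≤ j → p j = none) →
    (∀ i j, i < r → j < r → NestLe f i j → p j ≠ none → p i ≠ none) →
    Relation.ReflTransGen DirectTrunc (r, f, C)
      (cnt p r, subst3 f p, C + 3 * ∑ i ∈ Finset.range r, (p i).getD 0) := by
  induction r with
  | zero =>
    intro f C p hpos hbdd hp hdc
    have hall : ∀ j, p j = none := fun j => hp j (Nat.zero_le j)
    rw [subst3_none f p hall]
    have h2 : cnt p 0 = 0 := by simp [cnt]
    rw [h2]
    simp only [Finset.range_zero, Finset.sum_empty, Nat.mul_zero, Nat.add_zero]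
    exact Relation.ReflTransGen.refl
  | succ r ih =>
    intro f C p hpos hbdd hp hdc
    by_cases hall : ∀ j, p j = none
    · rw [subst3_none f p hall, cnt_all_none hall]
      have hsum : ∑ i ∈ Finset.range (r+1), (p i).getD 0 = 0 :=
        Finset.sum_eq_zero fun i _ => by rw [hall i]; rfl
      rw [hsum]
      simp only [Nat.mul_zero, Nat.add_zero]
      exact Relation.ReflTransGen.refl
    · push_neg at hall
      obtain ⟨j₀, hj₀⟩ := hall
      have hj₀r : j₀ < r + 1 := by
        by_contra hcon
        exact hj₀ (hp j₀ (by omega))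
      set S := (Finset.range (r+1)).filter (fun x => p x ≠ none) with hS
      have hSne : S.Nonempty := ⟨j₀, Finset.mem_filter.2 ⟨Finset.mem_range.2 hj₀r, hj₀⟩⟩
      obtain ⟨i, hiS, hmin⟩ := Finset.exists_min_image S
        (fun x => ((f.support).filter (fun m : ℕ →₀ ℕ => m x ≠ 0)).card) hSne
      have hiR := Finset.mem_range.1 (Finset.mem_filter.1 hiS).1
      have hiNe := (Finset.mem_filter.1 hiS).2
      obtain ⟨k, hpk⟩ : ∃ k, p i = some k := Option.ne_none_iff_exists'.1 hiNe
      have hminvar : IsMinVar (r+1) f i := by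
        refine ⟨hiR, fun j hj hji => ?_⟩
        have hsub : (f.support.filter (fun m => m j ≠ 0)) ⊆
            (f.support.filter (fun m => m i ≠ 0)) := by
          intro m hm
          have hm' := Finset.mem_filter.1 hm
          exact Finset.mem_filter.2 ⟨hm'.1, hji m hm'.1 hm'.2⟩
        have hjS : j ∈ S := Finset.mem_filter.2 ⟨Finset.mem_range.2 hj,
          hdc j i hj hiR hji hiNe⟩
        have hcard := hmin j hjS
        have heq := Finset.eq_of_subset_of_card_le hsub hcard
        intro m hm hmi
        have : m ∈ f.support.filter (fun m => m j ≠ 0) := by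
          rw [heq]
          exact Finset.mem_filter.2 ⟨hm, hmi⟩
        exact (Finset.mem_filter.1 this).2
      have hstep : DirectTrunc (r+1, f, C) (r, truncAt f i k, C + 3*k) :=
        ⟨i, k, rfl, hminvar, rfl, rfl⟩
      set p' : ℕ → Option ℕ := fun j => if j < i then p j else p (j+1) with hp'
      have hlift : ∀ a, p' a = p (if a < i then a else a + 1) := by
        intro a
        by_cases h : a < i <;> simp [hp', h]
      have hcomp : compP (sgl i k) p' = p := by
        funext j
        rcases lt_trichotomy j i with hlt | heq | hgt
        · rw [compP_none (by show (if j = i then some k else none) = none; rw [if_neg (by omega)]),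
            cnt_sgl, if_pos (by omega)]
          simp only [hp']
          rw [if_pos hlt]
        · subst heq
          rw [compP_some (show sgl j k j = some k by simp [sgl]), hpk]
        · rw [compP_none (by show (if j = i then some k else none) = none; rw [if_neg (by omega)]),
            cnt_sgl, if_neg (by omega)]
          simp only [hp']
          rw [if_neg (by omega)]
          congr 1
          omega
      have hsub3 : subst3 (truncAt f i k) p' = subst3 f p := by
        rw [truncAt_eq, subst3_comp, hcomp]
      have hcnt : cnt p' r = cnt p (r+1) := by
        conv_rhs => rw [← hcomp]
        rw [cnt_comp, cnt_sgl, if_neg (by omega)]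
        norm_num
      have hsum : ∑ x ∈ Finset.range (r+1), (p x).getD 0
          = k + ∑ x ∈ Finset.range r, (p' x).getD 0 := by
        conv_lhs => rw [← hcomp]
        rw [sum_getD_comp, cnt_sgl, if_neg (by omega), sum_sgl_getD i k (r+1) (by omega)]
        norm_num
      have hpos' : Pos (truncAt f i k) := by
        rw [truncAt_eq]
        exact pos_subst3 hpos _
      have hbdd' : Bdd r (truncAt f i k) := by
        rw [truncAt_eq]
        have := bdd_subst3 hbdd (sgl i k)
        rw [cnt_sgl, if_neg (by omega)] at this
        simpa using this
      have hp'' : ∀ j, r ≤ j → p' j = none := by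
        intro j hj
        rw [hlift j, if_neg (by omega)]
        exact hp (j+1) (by omega)
      have hdc' : ∀ a b, a < r → b < r → NestLe (truncAt f i k) a b →
          p' b ≠ none → p' a ≠ none := by
        intro a b ha hb hnest hbne
        have hnest2 : NestLe f (if a < i then a else a + 1) (if b < i then b else b + 1) := by
          apply nestle_subst3_up hpos (sgl_lift i k a) (sgl_lift i k b)
          rw [cnt_sgl_lift, cnt_sgl_lift, ← truncAt_eq]
          exact hnest
        have h2 := hdc (if a < i then a else a + 1) (if b < i then b else b + 1)
          (by split <;> omega) (by split <;> omega) hnest2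
          (by rw [← hlift b]; exact hbne)
        rw [hlift a]
        exact h2
      have ihr := ih (truncAt f i k) (C + 3*k) p' hpos' hbdd' hp'' hdc'
      refine Relation.ReflTransGen.head hstep ?_
      have h3 : C + 3 * k + 3 * ∑ x ∈ Finset.range r, (p' x).getD 0
          = C + 3 * ∑ x ∈ Finset.range (r+1), (p x).getD 0 := by
        rw [hsum]
        ring
      rw [← hcnt, ← hsub3, ← h3]
      exact ihr

lemma part3 {r : ℕ} {f : MvPolynomial ℕ ℤ} {C : ℕ} (hpos : Pos f)
    (hanti : AntiS r f) :
    ∀ x : ℕ × MvPolynomial ℕ ℤ × ℕ, Relation.ReflTransGen DirectTrunc (r, f, C) x →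
      ∃ q : ℕ → Option ℕ, (∀ j, r ≤ j → q j = none) ∧
        (∀ i j, i < r → j < r → NestLe f i j → q j ≠ none → q i ≠ none) ∧
        x.1 = cnt q r ∧ x.2.1 = subst3 f q ∧
        x.2.2 = C + 3 * ∑ i ∈ Finset.range r, (q i).getD 0 := by
  intro x h
  induction h with
  | refl =>
    refine ⟨fun _ => none, fun _ _ => rfl, fun i j _ _ _ hne => (hne rfl).elim, ?_, ?_, ?_⟩
    · rw [cnt_all_none (fun _ => rfl)]
    · rw [subst3_none f _ (fun _ => rfl)]
    · simp
  | @tail b x' hab hbc ihb =>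
    obtain ⟨q, hq1, hq2, hq3, hq4, hq5⟩ := ihb
    obtain ⟨i, k, hr, hminv, hg, hD⟩ := hbc
    rw [hq3, hq4] at hminv
    have hir : i < cnt q r := hminv.1
    refine ⟨compP q (sgl i k), ?_, ?_, ?_, ?_, ?_⟩
    · intro j hj
      rw [compP_none (hq1 j hj)]
      have := cnt_mono q hj
      show (if cnt q j = i then some k else none) = none
      rw [if_neg (by omega)]
    · intro a b' ha hb' hnest hne
      by_cases hqb : q b' = none
      · rw [compP_none hqb] at hne
        have hib' : cnt q b' = i := by
          by_contra hc
          exact hne (by show (if cnt q b' = i then some k else none) = none; rw [if_neg hc])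
        by_cases hqa : q a = none
        · have hd1 : NestLe (subst3 f q) (cnt q a) (cnt q b') :=
            nestle_subst3_down hqa hqb hnest
          have hlt : cnt q a < cnt q r := cnt_lt q ha hqa
          have hd2 : NestLe (subst3 f q) (cnt q b') (cnt q a) := by
            rw [hib']
            apply hminv.2 (cnt q a) hlt
            rw [← hib']
            exact hd1
          have hba : NestLe f b' a := nestle_subst3_up hpos hqb hqa hd2
          have heq : a = b' := hanti a b' ha hb' hnest hba
          rw [heq, compP_none hqb]
          exact hne
        · obtain ⟨k', hk'⟩ := Option.ne_none_iff_exists'.1 hqa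
          rw [compP_some hk']
          exact fun hc => by cases hc
      · have hqa := hq2 a b' ha hb' hnest hqb
        obtain ⟨k', hk'⟩ := Option.ne_none_iff_exists'.1 hqa
        rw [compP_some hk']
        exact fun hc => by cases hc
    · rw [cnt_comp, cnt_sgl, if_neg (by omega)]
      omega
    · rw [hg, hq4, truncAt_eq, subst3_comp]
    · rw [hD, hq5, sum_getD_comp, sum_sgl_getD i k _ hir]
      ring

/-- 3-substituting a tuple whose fixed coordinates form a
downward closed set of variables yields a truncation, with `δ_{g,D} = δ_{f,C} ∘ ι`;
and all truncations arise this way. -/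
theorem subst3_truncation (r : ℕ) (f : MvPolynomial ℕ ℤ) (C : ℕ) (hf : LDP r f C)
    (p : ℕ → Option ℕ) (hp : ∀ j, r ≤ j → p j = none)
    (hdc : ∀ i j, i < r → j < r → NestLe f i j → p j ≠ none → p i ≠ none) :
    Relation.ReflTransGen DirectTrunc (r, f, C)
      (starCount r p, subst3 f p, C + 3 * ∑ i ∈ Finset.range r, (p i).getD 0) ∧
    (∀ ℓ : ℕ → ℕ,
      dftF (starCount r p) (subst3 f p)
        (C + 3 * ∑ i ∈ Finset.range r, (p i).getD 0) ℓ = dftF r f C (iotaMap p ℓ)) ∧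
    (∀ (r' : ℕ) (g : MvPolynomial ℕ ℤ) (D : ℕ),
      Relation.ReflTransGen DirectTrunc (r, f, C) (r', g, D) →
      ∃ q : ℕ → Option ℕ, (∀ j, r ≤ j → q j = none) ∧
        (∀ i j, i < r → j < r → NestLe f i j → q j ≠ none → q i ≠ none) ∧
        r' = starCount r q ∧ g = subst3 f q ∧
        D = C + 3 * ∑ i ∈ Finset.range r, (q i).getD 0) := by
  obtain ⟨hpos, hbdd, _, _, hanti⟩ := LDP_struct hf
  refine ⟨?_, ?_, ?_⟩
  · exact part1 r f C p hpos hbdd hp hdc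
  · intro ℓ
    exact part2 f p r C hp ℓ
  · intro r' g D h
    obtain ⟨q, h1, h2, h3, h4, h5⟩ := part3 hpos hanti (r', g, D) h
    exact ⟨q, h1, h2, h3, h4, h5⟩
end

section
/- Let (f,C) be a low-defect pair of degree k, and let a be the leading coefficient of f. Then C ≥ ‖a‖ + k. Equivalently, if f is a low-defect polynomial of degree k with leading coefficient a, then ‖f‖ ≥ ‖a‖ + k, where ‖f‖ is the least C such that (f,C) is a low-defect pair. -/
/-- `‖f‖` : the least `C` such that `(f, C)` is a low-defect pair. -/
noncomputable def polyCpx (f : MvPolynomial ℕ ℤ) : ℕ := sInf {C | ∃ r, LDP r f C}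

section Aux

lemma cpxW_pos {n k : ℕ} (h : CpxW n k) : 1 ≤ n ∧ 1 ≤ k := by
  induction h with
  | one => exact ⟨le_refl 1, le_refl 1⟩
  | add _ _ ih1 ih2 => omega
  | mul _ _ ih1 ih2 =>
      exact ⟨le_trans (by norm_num) (Nat.mul_le_mul ih1.1 ih2.1), by omega⟩

lemma cpxW_self {n : ℕ} (h : 1 ≤ n) : CpxW n n := by
  induction n with
  | zero => omega
  | succ m ih =>
      rcases Nat.eq_or_lt_of_le h with h1 | h1
      · rw [← h1]; exact CpxW.one
      · exact CpxW.add (ih (by omega)) CpxW.one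

lemma cpx_spec {n : ℕ} (h : 0 < n) : CpxW n (cpx n) :=
  Nat.sInf_mem (s := {k | CpxW n k}) ⟨n, cpxW_self h⟩

lemma cpx_pos {n : ℕ} (h : 0 < n) : 1 ≤ cpx n := (cpxW_pos (cpx_spec h)).2

lemma cpx_mul {a b : ℕ} (ha : 0 < a) (hb : 0 < b) : cpx (a * b) ≤ cpx a + cpx b :=
  Nat.sInf_le (CpxW.mul (cpx_spec ha) (cpx_spec hb))

/-- the monomial `x₀ ⋯ x_{r-1}` -/
noncomputable def mu (r : ℕ) : ℕ →₀ ℕ := ∑ i ∈ Finset.range r, Finsupp.single i 1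

lemma leadCoeff_eq (r : ℕ) (f : MvPolynomial ℕ ℤ) :
    leadCoeff r f = MvPolynomial.coeff (mu r) f := rfl

lemma mu_apply (r j : ℕ) : mu r j = if j < r then 1 else 0 := by
  classical
  simp [mu, Finsupp.finset_sum_apply, Finsupp.single_apply, Finset.sum_ite_eq',
    Finset.mem_range]

lemma mu_add (r₁ r₂ : ℕ) :
    mu (r₁ + r₂) = mu r₁ + ∑ i ∈ Finset.range r₂, Finsupp.single (i + r₁) 1 := by
  classical
  ext j
  rw [Finsupp.add_apply, mu_apply, mu_apply, Finsupp.finset_sum_apply]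
  simp only [Finsupp.single_apply]
  rcases lt_or_ge j r₁ with h | h
  · rw [Finset.sum_eq_zero (fun i _ => by rw [if_neg]; omega)]
    split_ifs <;> omega
  · rcases lt_or_ge j (r₁ + r₂) with h2 | h2
    · rw [Finset.sum_eq_single (j - r₁)
        (fun b _ hb => by rw [if_neg]; omega)
        (fun hb => absurd (Finset.mem_range.mpr (by omega)) hb)]
      split_ifs <;> omega
    · rw [Finset.sum_eq_zero (fun i hi => by
        rw [Finset.mem_range] at hi; rw [if_neg]; omega)]
      split_ifs <;> omega

lemma mapDomain_mu (r₁ r₂ : ℕ) :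
    Finsupp.mapDomain (· + r₁) (mu r₂) = ∑ i ∈ Finset.range r₂, Finsupp.single (i + r₁) 1 := by
  rw [mu, Finsupp.mapDomain_finset_sum]
  exact Finset.sum_congr rfl fun i _ => Finsupp.mapDomain_single

lemma ldp_main {r : ℕ} {f : MvPolynomial ℕ ℤ} {C : ℕ} (h : LDP r f C) :
    (∀ m : ℕ →₀ ℕ, MvPolynomial.coeff m f ≠ 0 → ∀ i, m i ≤ if i < r then 1 else 0) ∧
    ∃ a : ℕ, 0 < a ∧ leadCoeff r f = (a : ℤ) ∧ cpx a + r ≤ C := by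
  classical
  induction h with
  | const k C hk hC =>
      constructor
      · intro m hm i
        rw [MvPolynomial.coeff_C] at hm
        by_cases h0 : m = 0
        · simp [h0]
        · rw [if_neg (fun h => h0 h.symm)] at hm
          exact absurd rfl hm
      · refine ⟨k, hk, ?_, by simpa using hC⟩
        rw [leadCoeff_eq]
        have : mu 0 = 0 := by simp [mu]
        rw [this, MvPolynomial.coeff_C, if_pos rfl]
  | @mul r₁ r₂ f₁ f₂ C₁ C₂ h1 h2 ih1 ih2 =>
      obtain ⟨hml1, a₁, ha₁pos, ha₁, ha₁C⟩ := ih1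
      obtain ⟨hml2, a₂, ha₂pos, ha₂, ha₂C⟩ := ih2
      have hinj : Function.Injective (· + r₁) := fun x y hxy => by simpa using hxy
      have hren : ∀ m : ℕ →₀ ℕ,
          MvPolynomial.coeff m (MvPolynomial.rename (· + r₁) f₂) ≠ 0 →
          ∀ i, m i ≤ if r₁ ≤ i ∧ i < r₁ + r₂ then 1 else 0 := by
        intro m hm i
        obtain ⟨u, hu, hu0⟩ := MvPolynomial.coeff_rename_ne_zero _ _ _ hm
        subst hu
        rcases lt_or_ge i r₁ with hi | hi
        · rw [Finsupp.mapDomain_notin_range]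
          · split_ifs <;> omega
          · rintro ⟨x, hx⟩; simp only at hx; omega
        · have hieq : i = (i - r₁) + r₁ := by omega
          rw [hieq, Finsupp.mapDomain_apply hinj]
          have h2 := hml2 u hu0 (i - r₁)
          split_ifs at h2 ⊢ <;> omega
      constructor
      · intro m hm i
        rw [MvPolynomial.coeff_mul] at hm
        obtain ⟨x, hx, hx0⟩ := Finset.exists_ne_zero_of_sum_ne_zero hm
        rw [Finset.HasAntidiagonal.mem_antidiagonal] at hx
        have h1 := hml1 x.1 (fun h => hx0 (by rw [h, zero_mul])) i
        have h2 := hren x.2 (fun h => hx0 (by rw [h, mul_zero])) i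
        have hmx : m i = x.1 i + x.2 i := by
          rw [← hx]; exact Finsupp.add_apply _ _ _
        split_ifs at h1 h2 ⊢ <;> omega
      · refine ⟨a₁ * a₂, Nat.mul_pos ha₁pos ha₂pos, ?_, ?_⟩
        · have key : leadCoeff (r₁ + r₂) (f₁ * MvPolynomial.rename (· + r₁) f₂)
              = leadCoeff r₁ f₁ * leadCoeff r₂ f₂ := by
            rw [leadCoeff_eq, MvPolynomial.coeff_mul]
            rw [Finset.sum_eq_single (mu r₁, Finsupp.mapDomain (· + r₁) (mu r₂))]
            · rw [MvPolynomial.coeff_rename_mapDomain _ hinj]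
              rfl
            · rintro ⟨b₁, b₂⟩ hb hne
              rw [Finset.HasAntidiagonal.mem_antidiagonal] at hb
              by_contra hcon
              have hb1 : MvPolynomial.coeff b₁ f₁ ≠ 0 := fun h => hcon (by
                show MvPolynomial.coeff b₁ f₁ * _ = 0
                rw [h, zero_mul])
              have hb2 : MvPolynomial.coeff b₂ (MvPolynomial.rename (· + r₁) f₂) ≠ 0 :=
                fun h => hcon (by
                  show _ * MvPolynomial.coeff b₂ _ = 0
                  rw [h, mul_zero])
              have hbeq : b₁ = mu r₁ := by
                ext j
                have hsum : b₁ j + b₂ j = mu (r₁ + r₂) j := by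
                  rw [← hb]; exact (Finsupp.add_apply _ _ _).symm
                rw [mu_apply] at hsum ⊢
                have h1 := hml1 b₁ hb1 j
                have h2 := hren b₂ hb2 j
                split_ifs at h1 h2 hsum ⊢ <;> omega
              apply hne
              have hbeq2 : b₂ = Finsupp.mapDomain (· + r₁) (mu r₂) := by
                have heq : b₁ + b₂ = mu r₁ + Finsupp.mapDomain (· + r₁) (mu r₂) := by
                  rw [hb, mapDomain_mu, mu_add]
                rw [hbeq] at heq
                exact add_left_cancel heq
              rw [hbeq, hbeq2]
            · intro hnot
              exact absurd (Finset.HasAntidiagonal.mem_antidiagonal.mpr (by rw [mapDomain_mu, ← mu_add])) hnot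
          rw [key, ha₁, ha₂]
          push_cast
          ring
        · have := cpx_mul ha₁pos ha₂pos
          omega
  | @step r f C c D hc hD h ih =>
      obtain ⟨hml, a, hapos, ha, haC⟩ := ih
      have hmuC : ¬((0 : ℕ →₀ ℕ) = mu (r + 1)) := by
        intro hcon
        have h1 : mu (r + 1) r = 1 := by rw [mu_apply, if_pos (by omega)]
        rw [← hcon] at h1
        simp at h1
      constructor
      · intro m hm i
        rw [MvPolynomial.coeff_add, MvPolynomial.coeff_C] at hm
        by_cases h0 : m = 0
        · simp [h0]
        · rw [if_neg (fun h => h0 h.symm), add_zero, MvPolynomial.coeff_mul_X'] at hm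
          split at hm
          · have h1 := hml _ hm i
            rw [Finsupp.coe_tsub, Pi.sub_apply, Finsupp.single_apply] at h1
            split_ifs at h1 ⊢ <;> omega
          · exact absurd rfl hm
      · refine ⟨a, hapos, ?_, ?_⟩
        · rw [leadCoeff_eq]
          have hmu : mu (r + 1) = mu r + Finsupp.single r 1 := Finset.sum_range_succ _ _
          rw [MvPolynomial.coeff_add, MvPolynomial.coeff_C, if_neg hmuC, add_zero, hmu,
            MvPolynomial.coeff_mul_X]
          exact ha
        · have h1 : 1 ≤ cpx c := cpx_pos hc
          omega

theorem ldp_lower {r : ℕ} {f : MvPolynomial ℕ ℤ} {C : ℕ} (h : LDP r f C)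
    {a : ℕ} (ha : leadCoeff r f = (a : ℤ)) : cpx a + r ≤ C := by
  obtain ⟨_, a', ha'pos, ha', ha'C⟩ := ldp_main h
  have haa : a = a' := by exact_mod_cast ha.symm.trans ha'
  rw [haa]; exact ha'C

theorem ldp_deg_unique {r r' : ℕ} {f : MvPolynomial ℕ ℤ} {C C' : ℕ}
    (h : LDP r f C) (h' : LDP r' f C') : r = r' := by
  obtain ⟨hml, a, hapos, ha, _⟩ := ldp_main h
  obtain ⟨hml', a', ha'pos, ha', _⟩ := ldp_main h'
  by_contra hne
  rcases Nat.lt_or_ge r r' with hlt | hge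
  · have hne0 : MvPolynomial.coeff (mu r') f ≠ 0 := by
      rw [← leadCoeff_eq, ha']
      exact_mod_cast ha'pos.ne'
    have hle := hml (mu r') hne0 r
    rw [mu_apply, if_pos hlt, if_neg (lt_irrefl r)] at hle
    omega
  · have hlt : r' < r := by omega
    have hne0 : MvPolynomial.coeff (mu r) f ≠ 0 := by
      rw [← leadCoeff_eq, ha]
      exact_mod_cast hapos.ne'
    have hle := hml' (mu r) hne0 r'
    rw [mu_apply, if_pos hlt, if_neg (lt_irrefl r')] at hle
    omega

end Aux

/-- For a low-defect pair `(f,C)` of degree `k` with leading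
coefficient `a`, `C ≥ ‖a‖ + k`; equivalently `‖f‖ ≥ ‖a‖ + k`. -/
theorem pair_cpx_lower_bound (k : ℕ) (f : MvPolynomial ℕ ℤ) (C : ℕ) (hf : LDP k f C)
    (a : ℕ) (ha : leadCoeff k f = (a : ℤ)) :
    cpx a + k ≤ C ∧ cpx a + k ≤ polyCpx f := by
  refine ⟨ldp_lower hf ha, ?_⟩
  have hne : {C' | ∃ r, LDP r f C'}.Nonempty := ⟨C, k, hf⟩
  obtain ⟨r', hr'⟩ := Nat.sInf_mem hne
  have hdeg : k = r' := ldp_deg_unique hf hr'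
  subst hdeg
  exact ldp_lower hr' ha
end

section
/- Let f be a low-defect polynomial of degree r. Then every monomial appearing in f other than the leading monomial x₁⋯x_r omits at least one variable that is minimal with respect to the nesting order of f; that is, for each such monomial m there is a minimal variable x with x ∤ m. -/
section StarAux

open MvPolynomial

/-- The leading monomial of degree `r`. -/
noncomputable def Lead (r : ℕ) : ℕ →₀ ℕ := ∑ i ∈ Finset.range r, Finsupp.single i 1

theorem Lead_apply (r i : ℕ) : Lead r i = if i < r then 1 else 0 := by
  classical
  simp only [Lead, Finsupp.finset_sum_apply, Finsupp.single_apply]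
  rw [Finset.sum_ite_eq' (Finset.range r) i (fun _ => 1)]
  simp [Finset.mem_range]

theorem shift_inj (r₁ : ℕ) : Function.Injective (· + r₁ : ℕ → ℕ) := add_left_injective r₁

theorem shift_apply (r₁ : ℕ) (d : ℕ →₀ ℕ) (i : ℕ) :
    Finsupp.mapDomain (· + r₁) d i = if r₁ ≤ i then d (i - r₁) else 0 := by
  split_ifs with h
  · obtain ⟨a, rfl⟩ : ∃ a, i = a + r₁ := ⟨i - r₁, by omega⟩
    rw [Nat.add_sub_cancel]
    exact Finsupp.mapDomain_apply (shift_inj r₁) d a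
  · apply Finsupp.mapDomain_notin_range
    rintro ⟨a, ha⟩
    have : a + r₁ = i := ha
    omega

theorem filter_add_filter_not (p : ℕ → Prop) [DecidablePred p] (m : ℕ →₀ ℕ) :
    m.filter p + m.filter (fun i => ¬ p i) = m := by
  ext i
  simp only [Finsupp.add_apply, Finsupp.filter_apply]
  split_ifs <;> simp_all

theorem coeff_mul_split_s11 (r₁ : ℕ) (f g : MvPolynomial ℕ ℤ)
    (hf : ∀ m : ℕ →₀ ℕ, coeff m f ≠ 0 → ∀ i, ¬ i < r₁ → m i = 0)
    (hg : ∀ m : ℕ →₀ ℕ, coeff m g ≠ 0 → ∀ i, i < r₁ → m i = 0)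
    (m : ℕ →₀ ℕ) :
    coeff m (f * g)
      = coeff (m.filter (· < r₁)) f * coeff (m.filter (fun i => ¬ i < r₁)) g := by
  classical
  rw [coeff_mul]
  apply Finset.sum_eq_single (m.filter (· < r₁), m.filter (fun i => ¬ i < r₁))
  · rintro ⟨a, b⟩ hab hne
    rw [Finset.HasAntidiagonal.mem_antidiagonal] at hab
    by_contra hc
    have ha : coeff a f ≠ 0 := fun h => hc (by simp [h])
    have hb : coeff b g ≠ 0 := fun h => hc (by simp [h])
    have habi : ∀ i, a i + b i = m i := fun i => by
      rw [← Finsupp.add_apply, hab]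
    apply hne
    have hA : a = m.filter (· < r₁) := by
      ext i
      rw [Finsupp.filter_apply]
      by_cases hi : i < r₁
      · simp only [hi, if_true]
        have h1 := habi i
        rw [hg b hb i hi] at h1
        omega
      · simp only [hi, if_false]
        exact hf a ha i hi
    have hB : b = m.filter (fun i => ¬ i < r₁) := by
      ext i
      rw [Finsupp.filter_apply]
      by_cases hi : i < r₁
      · rw [if_neg (not_not_intro hi)]
        exact hg b hb i hi
      · rw [if_pos hi]
        have h1 := habi i
        rw [hf a ha i hi] at h1
        omega
    exact Prod.ext hA hB
  · intro hnot
    exact absurd (Finset.HasAntidiagonal.mem_antidiagonal.2 (filter_add_filter_not _ m)) hnot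

/-- The big inductive invariant for low-defect pairs. -/
theorem LDP_inv {r : ℕ} {f : MvPolynomial ℕ ℤ} {C : ℕ} (h : LDP r f C) :
    (∀ m, 0 ≤ coeff m f) ∧
    (∀ m : ℕ →₀ ℕ, coeff m f ≠ 0 → ∀ i, m i ≤ Lead r i) ∧
    0 < coeff 0 f ∧
    0 < coeff (Lead r) f ∧
    (∀ m ∈ f.support, m ≠ Lead r → ∃ i < r, IsMinVar r f i ∧ m i = 0) := by
  classical
  induction h with
  | const k C hk hC =>
    have hk' : (k : ℤ) ≠ 0 := by exact_mod_cast hk.ne'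
    have hL : Lead 0 = (0 : ℕ →₀ ℕ) := by simp [Lead]
    refine ⟨?_, ?_, ?_, ?_, ?_⟩
    · intro m; rw [coeff_C]; split_ifs <;> positivity
    · intro m hm i
      rw [coeff_C] at hm
      by_cases h0 : (0 : ℕ →₀ ℕ) = m
      · subst h0; simp
      · simp [h0] at hm
    · rw [coeff_C, if_pos rfl]; exact_mod_cast hk
    · rw [hL, coeff_C, if_pos rfl]; exact_mod_cast hk
    · intro m hm hmne
      exfalso
      rw [MvPolynomial.mem_support_iff, coeff_C] at hm
      by_cases h0 : (0 : ℕ →₀ ℕ) = m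
      · exact hmne (h0.symm.trans hL.symm)
      · rw [if_neg h0] at hm; exact hm rfl
  | @mul r₁ r₂ f₁ f₂ C₁ C₂ h₁ h₂ ih₁ ih₂ =>
    obtain ⟨pos₁, bdd₁, c0₁, cl₁, main₁⟩ := ih₁
    obtain ⟨pos₂, bdd₂, c0₂, cl₂, main₂⟩ := ih₂
    set sh : (ℕ →₀ ℕ) → (ℕ →₀ ℕ) := Finsupp.mapDomain (· + r₁) with hsh
    set f₂' : MvPolynomial ℕ ℤ := MvPolynomial.rename (· + r₁) f₂ with hf₂'
    have cF2' : ∀ d, coeff (sh d) f₂' = coeff d f₂ := fun d =>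
      MvPolynomial.coeff_rename_mapDomain _ (shift_inj r₁) f₂ d
    have deF2' : ∀ m, coeff m f₂' ≠ 0 → ∃ d, sh d = m ∧ coeff d f₂ ≠ 0 := fun m hm =>
      MvPolynomial.coeff_rename_ne_zero _ _ _ hm
    have pos₂' : ∀ m, 0 ≤ coeff m f₂' := by
      intro m
      by_cases hm : coeff m f₂' = 0
      · rw [hm]
      · obtain ⟨d, hd, -⟩ := deF2' m hm
        rw [← hd, cF2']; exact pos₂ d
    have hlow : ∀ m : ℕ →₀ ℕ, coeff m f₁ ≠ 0 → ∀ i, ¬ i < r₁ → m i = 0 := by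
      intro m hm i hi
      have := bdd₁ m hm i
      rw [Lead_apply, if_neg hi] at this
      omega
    have hhigh : ∀ m : ℕ →₀ ℕ, coeff m f₂' ≠ 0 → ∀ i, i < r₁ → m i = 0 := by
      intro m hm i hi
      obtain ⟨d, hd, -⟩ := deF2' m hm
      rw [← hd, shift_apply, if_neg (by omega)]
    have split : ∀ m : ℕ →₀ ℕ, coeff m (f₁ * f₂')
        = coeff (m.filter (· < r₁)) f₁ * coeff (m.filter (fun i => ¬ i < r₁)) f₂' :=
      coeff_mul_split_s11 r₁ f₁ f₂' hlow hhigh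
    -- a monomial supported below r₁ filters trivially
    have flo : ∀ m : ℕ →₀ ℕ, (∀ i, ¬ i < r₁ → m i = 0) →
        m.filter (· < r₁) = m ∧ m.filter (fun i => ¬ i < r₁) = 0 := by
      intro m hm
      constructor <;> ext i <;> rw [Finsupp.filter_apply] <;> by_cases hi : i < r₁
      · rw [if_pos hi]
      · rw [if_neg hi]; exact (hm i hi).symm
      · rw [if_neg (not_not_intro hi)]; rfl
      · rw [if_pos hi]; exact hm i hi
    have fhi : ∀ d : ℕ →₀ ℕ,
        (sh d).filter (· < r₁) = 0 ∧ (sh d).filter (fun i => ¬ i < r₁) = sh d := by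
      intro d
      constructor <;> ext i <;> rw [Finsupp.filter_apply] <;> by_cases hi : i < r₁
      · rw [if_pos hi, hsh, shift_apply, if_neg (by omega)]; rfl
      · rw [if_neg hi]; rfl
      · rw [if_neg (not_not_intro hi), hsh, shift_apply, if_neg (by omega)]
      · rw [if_pos hi]
    have sh0 : sh 0 = 0 := Finsupp.mapDomain_zero
    have c02' : coeff 0 f₂' = coeff 0 f₂ := by
      conv_lhs => rw [← sh0]
      exact cF2' 0
    have coeff_pure1 : ∀ m : ℕ →₀ ℕ, coeff m f₁ ≠ 0 →
        coeff m (f₁ * f₂') = coeff m f₁ * coeff 0 f₂ := by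
      intro m hm
      rw [split m, (flo m (hlow m hm)).1, (flo m (hlow m hm)).2, c02']
    have coeff_pure2 : ∀ d : ℕ →₀ ℕ,
        coeff (sh d) (f₁ * f₂') = coeff 0 f₁ * coeff d f₂ := by
      intro d
      rw [split (sh d), (fhi d).1, (fhi d).2, cF2']
    have mem1 : ∀ m : ℕ →₀ ℕ, coeff m f₁ ≠ 0 → m ∈ (f₁ * f₂').support := by
      intro m hm
      rw [MvPolynomial.mem_support_iff, coeff_pure1 m hm]
      exact mul_ne_zero hm c0₂.ne'
    have mem2 : ∀ d : ℕ →₀ ℕ, coeff d f₂ ≠ 0 → sh d ∈ (f₁ * f₂').support := by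
      intro d hd
      rw [MvPolynomial.mem_support_iff, coeff_pure2 d]
      exact mul_ne_zero c0₁.ne' hd
    have descend : ∀ m ∈ (f₁ * f₂').support,
        coeff (m.filter (· < r₁)) f₁ ≠ 0 ∧
        ∃ d, sh d = m.filter (fun i => ¬ i < r₁) ∧ coeff d f₂ ≠ 0 := by
      intro m hm
      rw [MvPolynomial.mem_support_iff, split m] at hm
      rcases mul_ne_zero_iff.1 hm with ⟨hA, hB⟩
      exact ⟨hA, deF2' _ hB⟩
    have mapply : ∀ m ∈ (f₁ * f₂').support, ∀ d, sh d = m.filter (fun i => ¬ i < r₁) →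
        (∀ i, i < r₁ → m i = m.filter (· < r₁) i) ∧
        (∀ i, r₁ ≤ i → m i = d (i - r₁)) := by
      intro m _ d hd
      constructor
      · intro i hi
        rw [Finsupp.filter_apply, if_pos hi]
      · intro i hi
        have h1 : m.filter (fun j => ¬ j < r₁) i = m i := by
          rw [Finsupp.filter_apply, if_pos (by omega)]
        rw [← h1, ← hd, hsh, shift_apply, if_pos hi]
    -- Lead decomposition
    have leadSplit : Lead (r₁ + r₂) = Lead r₁ + sh (Lead r₂) := by
      ext i
      rw [Finsupp.add_apply, hsh, shift_apply, Lead_apply, Lead_apply, Lead_apply]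
      split_ifs <;> omega
    -- nesting order transfer, f₁ side
    have nest1_to : ∀ i j, i < r₁ → j < r₁ → NestLe f₁ i j → NestLe (f₁ * f₂') i j := by
      intro i j hi hj hN m hm hmi
      obtain ⟨hA, d, hd, hdne⟩ := descend m hm
      obtain ⟨mlo, -⟩ := mapply m hm d hd
      rw [mlo i hi] at hmi
      rw [mlo j hj]
      exact hN _ (MvPolynomial.mem_support_iff.2 hA) hmi
    have nest1_from : ∀ i j, i < r₁ → j < r₁ → NestLe (f₁ * f₂') i j → NestLe f₁ i j := by
      intro i j hi hj hN m hm hmi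
      exact hN m (mem1 m (MvPolynomial.mem_support_iff.1 hm)) hmi
    -- nesting order transfer, f₂ side
    have nest2_to : ∀ i j, i < r₂ → j < r₂ → NestLe f₂ i j →
        NestLe (f₁ * f₂') (i + r₁) (j + r₁) := by
      intro i j hi hj hN m hm hmi
      obtain ⟨hA, d, hd, hdne⟩ := descend m hm
      obtain ⟨-, mhi⟩ := mapply m hm d hd
      rw [mhi (i + r₁) (by omega)] at hmi
      rw [mhi (j + r₁) (by omega)]
      simp only [Nat.add_sub_cancel] at hmi ⊢
      exact hN _ (MvPolynomial.mem_support_iff.2 hdne) hmi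
    have nest2_from : ∀ i j, i < r₂ → j < r₂ →
        NestLe (f₁ * f₂') (i + r₁) (j + r₁) → NestLe f₂ i j := by
      intro i j hi hj hN m hm hmi
      have h1 := hN (sh m) (mem2 m (MvPolynomial.mem_support_iff.1 hm))
      rw [hsh, shift_apply, shift_apply, if_pos (by omega : r₁ ≤ i + r₁),
        if_pos (by omega : r₁ ≤ j + r₁)] at h1
      simp only [Nat.add_sub_cancel] at h1
      exact h1 hmi
    -- no cross relations
    have noCross1 : ∀ i j, i < r₁ → r₁ ≤ j → j < r₁ + r₂ → ¬ NestLe (f₁ * f₂') j i := by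
      intro i j hi hj1 hj2 hN
      have hmem := mem2 (Lead r₂) cl₂.ne'
      have h1 := hN (sh (Lead r₂)) hmem
      rw [hsh, shift_apply, shift_apply, if_pos hj1, if_neg (by omega), Lead_apply,
        if_pos (by omega : j - r₁ < r₂)] at h1
      exact h1 one_ne_zero rfl
    have noCross2 : ∀ i j, i < r₂ → j < r₁ → ¬ NestLe (f₁ * f₂') j (i + r₁) := by
      intro i j hi hj hN
      have hmem := mem1 (Lead r₁) cl₁.ne'
      have h1 := hN (Lead r₁) hmem
      rw [Lead_apply, Lead_apply, if_pos hj, if_neg (by omega)] at h1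
      exact h1 one_ne_zero rfl
    refine ⟨?_, ?_, ?_, ?_, ?_⟩
    · intro m
      rw [split m]
      exact mul_nonneg (pos₁ _) (pos₂' _)
    · intro m hm i
      obtain ⟨hA, d, hd, hdne⟩ := descend m (MvPolynomial.mem_support_iff.2 hm)
      obtain ⟨mlo, mhi⟩ := mapply m (MvPolynomial.mem_support_iff.2 hm) d hd
      by_cases hi : i < r₁
      · rw [mlo i hi, Lead_apply, if_pos (by omega)]
        have := bdd₁ _ hA i
        rw [Lead_apply, if_pos hi] at this
        exact this
      · rw [mhi i (by omega), Lead_apply]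
        have := bdd₂ _ hdne (i - r₁)
        rw [Lead_apply] at this
        split_ifs with h2
        · split_ifs at this with h3
          · exact this
          · omega
        · split_ifs at this with h3
          · omega
          · exact this
    · have h0 : (0 : ℕ →₀ ℕ) = sh 0 := sh0.symm
      rw [h0, coeff_pure2]
      exact mul_pos c0₁ c0₂
    · rw [leadSplit]
      have hL1 : coeff (Lead r₁ + sh (Lead r₂)) (f₁ * f₂')
          = coeff (Lead r₁) f₁ * coeff (Lead r₂) f₂ := by
        rw [split]
        have e1 : (Lead r₁ + sh (Lead r₂)).filter (· < r₁) = Lead r₁ := by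
          ext i
          rw [Finsupp.filter_apply, Finsupp.add_apply, hsh, shift_apply, Lead_apply, Lead_apply]
          split_ifs <;> omega
        have e2 : (Lead r₁ + sh (Lead r₂)).filter (fun i => ¬ i < r₁) = sh (Lead r₂) := by
          ext i
          simp only [Finsupp.filter_apply, Finsupp.add_apply, hsh, shift_apply, Lead_apply]
          split_ifs <;> omega
        rw [e1, e2, cF2']
      rw [hL1]
      exact mul_pos cl₁ cl₂
    · intro m hm hmne
      obtain ⟨hA, d, hd, hdne⟩ := descend m hm
      obtain ⟨mlo, mhi⟩ := mapply m hm d hd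
      by_cases hlo : m.filter (· < r₁) = Lead r₁
      · -- the f₂ part must be non-leading
        have hdne' : d ≠ Lead r₂ := by
          rintro rfl
          apply hmne
          rw [leadSplit, ← hlo, hd]
          exact (filter_add_filter_not _ m).symm
        obtain ⟨i₂, hi₂, hmin₂, hz₂⟩ := main₂ d (MvPolynomial.mem_support_iff.2 hdne) hdne'
        refine ⟨i₂ + r₁, by omega, ⟨by omega, ?_⟩, ?_⟩
        · intro j hj hji
          by_cases hjr : j < r₁
          · exact absurd hji (noCross2 i₂ j hi₂ hjr)
          · obtain ⟨j₂, rfl⟩ : ∃ j₂, j = j₂ + r₁ := ⟨j - r₁, by omega⟩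
            have hj₂ : j₂ < r₂ := by omega
            exact nest2_to i₂ j₂ hi₂ hj₂
              ((hmin₂.2 j₂ hj₂) (nest2_from j₂ i₂ hj₂ hi₂ hji))
        · rw [mhi (i₂ + r₁) (by omega)]
          simpa using hz₂
      · obtain ⟨i₁, hi₁, hmin₁, hz₁⟩ :=
          main₁ _ (MvPolynomial.mem_support_iff.2 hA) hlo
        refine ⟨i₁, by omega, ⟨by omega, ?_⟩, ?_⟩
        · intro j hj hji
          by_cases hjr : j < r₁
          · exact nest1_to i₁ j hi₁ hjr
              ((hmin₁.2 j hjr) (nest1_from j i₁ hjr hi₁ hji))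
          · exact absurd hji (noCross1 i₁ j hi₁ (by omega) (by omega))
        · rw [mlo i₁ hi₁]
          exact hz₁
  | @step r f C c D hc hD h ih =>
    obtain ⟨pos, bdd, c0, cl, main⟩ := ih
    have hc' : (0 : ℤ) < (c : ℤ) := by exact_mod_cast hc
    set e : ℕ →₀ ℕ := Finsupp.single r 1 with he
    set g : MvPolynomial ℕ ℤ := f * MvPolynomial.X r + MvPolynomial.C (c : ℤ) with hg
    have coeff_g : ∀ m : ℕ →₀ ℕ, coeff m g
        = (if m r ≠ 0 then coeff (m - e) f else 0) + (if (0 : ℕ →₀ ℕ) = m then (c : ℤ) else 0) := by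
      intro m
      rw [hg, MvPolynomial.coeff_add, MvPolynomial.coeff_mul_X', MvPolynomial.coeff_C]
      congr 1
      simp [Finsupp.mem_support_iff, he]
    have lift_eq : ∀ m₀ : ℕ →₀ ℕ, coeff m₀ f ≠ 0 → coeff (m₀ + e) g = coeff m₀ f := by
      intro m₀ hm₀
      have h1 : (m₀ + e) r ≠ 0 := by
        rw [Finsupp.add_apply, he, Finsupp.single_apply, if_pos rfl]
        omega
      have h2 : (0 : ℕ →₀ ℕ) ≠ m₀ + e := by
        intro hcon
        have := DFunLike.congr_fun hcon r
        rw [Finsupp.zero_apply] at this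
        exact h1 this.symm
      have h3 : m₀ + e - e = m₀ := by
        ext i
        rw [Finsupp.tsub_apply, Finsupp.add_apply]
        omega
      rw [coeff_g, if_pos h1, if_neg h2, h3, add_zero]
    have desc : ∀ m ∈ g.support, m ≠ 0 →
        m r ≠ 0 ∧ coeff (m - e) f ≠ 0 ∧ m = (m - e) + e := by
      intro m hm hm0
      rw [MvPolynomial.mem_support_iff, coeff_g] at hm
      have hσ : ¬ ((0 : ℕ →₀ ℕ) = m) := fun hcon => hm0 hcon.symm
      rw [if_neg hσ, add_zero] at hm
      by_cases hr : m r ≠ 0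
      · rw [if_pos hr] at hm
        refine ⟨hr, hm, ?_⟩
        ext i
        rw [Finsupp.add_apply, Finsupp.tsub_apply, he, Finsupp.single_apply]
        by_cases hir : r = i
        · subst hir; rw [if_pos rfl]; omega
        · rw [if_neg hir]; omega
      · rw [if_neg hr] at hm
        exact absurd rfl hm
    have top : ∀ i, NestLe g i r := by
      intro i m hm hmi
      have hm0 : m ≠ 0 := by
        intro hcon
        rw [hcon, Finsupp.zero_apply] at hmi
        exact hmi rfl
      exact (desc m hm hm0).1
    have eapp : ∀ i, i ≠ r → e i = 0 := by
      intro i hi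
      rw [he, Finsupp.single_apply, if_neg (fun hcon => hi hcon.symm)]
    have nest_to : ∀ i j, i < r → j < r → NestLe f i j → NestLe g i j := by
      intro i j hi hj hN m hm hmi
      have hm0 : m ≠ 0 := fun hcon => hmi (by rw [hcon]; rfl)
      obtain ⟨hr, hcoeff, hme⟩ := desc m hm hm0
      have h1 : m i = (m - e) i := by
        conv_lhs => rw [hme]
        rw [Finsupp.add_apply, eapp i (by omega), add_zero]
      have h2 : m j = (m - e) j := by
        conv_lhs => rw [hme]
        rw [Finsupp.add_apply, eapp j (by omega), add_zero]
      rw [h1] at hmi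
      rw [h2]
      exact hN _ (MvPolynomial.mem_support_iff.2 hcoeff) hmi
    have nest_from : ∀ i j, i < r → j < r → NestLe g i j → NestLe f i j := by
      intro i j hi hj hN m hm hmi
      have hmem : m + e ∈ g.support := by
        rw [MvPolynomial.mem_support_iff, lift_eq m (MvPolynomial.mem_support_iff.1 hm)]
        exact MvPolynomial.mem_support_iff.1 hm
      have h1 : (m + e) i = m i := by
        rw [Finsupp.add_apply, eapp i (by omega), add_zero]
      have h2 : (m + e) j = m j := by
        rw [Finsupp.add_apply, eapp j (by omega), add_zero]
      have := hN (m + e) hmem (by rw [h1]; exact hmi)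
      rwa [h2] at this
    have minTransfer : ∀ i, i < r → IsMinVar r f i → IsMinVar (r + 1) g i := by
      intro i hi hmin
      refine ⟨by omega, ?_⟩
      intro j hj hji
      by_cases hjr : j = r
      · subst hjr; exact top i
      · have hj' : j < r := by omega
        exact nest_to i j hi hj' ((hmin.2 j hj') (nest_from j i hj' hi hji))
    have leadsucc : Lead (r + 1) = Lead r + e := Finset.sum_range_succ _ r
    refine ⟨?_, ?_, ?_, ?_, ?_⟩
    · intro m
      rw [coeff_g]
      apply add_nonneg <;> split_ifs <;> first | exact pos _ | positivity | rfl
    · intro m hm i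
      rw [Lead_apply]
      by_cases hm0 : m = 0
      · rw [hm0, Finsupp.zero_apply]; omega
      · obtain ⟨hr, hcoeff, hme⟩ := desc m (MvPolynomial.mem_support_iff.2 hm) hm0
        have hb := bdd _ hcoeff i
        rw [Lead_apply] at hb
        by_cases hir : i = r
        · subst hir
          rw [if_pos (by omega)]
          rw [Finsupp.tsub_apply, if_neg (by omega)] at hb
          rw [he, Finsupp.single_apply, if_pos rfl] at hb
          omega
        · have h1 : m i = (m - e) i := by
            conv_lhs => rw [hme]
            rw [Finsupp.add_apply, eapp i hir, add_zero]
          rw [h1]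
          split_ifs with h2
          · split_ifs at hb with h3
            · exact hb
            · omega
          · split_ifs at hb with h3
            · omega
            · exact hb
    · rw [coeff_g]
      rw [if_neg (by simp), if_pos rfl]
      simpa using hc'
    · have h1 : Lead (r + 1) - e = Lead r := by
        rw [leadsucc]
        ext i
        rw [Finsupp.tsub_apply, Finsupp.add_apply]
        omega
      have h2 : Lead (r + 1) r ≠ 0 := by
        rw [Lead_apply, if_pos (by omega)]; omega
      have h3 : (0 : ℕ →₀ ℕ) ≠ Lead (r + 1) := by
        intro hcon
        have := DFunLike.congr_fun hcon r
        rw [Finsupp.zero_apply] at this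
        exact h2 this.symm
      rw [coeff_g, if_pos h2, if_neg h3, h1, add_zero]
      exact cl
    · intro m hm hmne
      by_cases hm0 : m = 0
      · subst hm0
        by_cases hr0 : r = 0
        · subst hr0
          refine ⟨0, by omega, ⟨by omega, ?_⟩, rfl⟩
          intro j hj hji
          have : j = 0 := by omega
          subst this
          exact hji
        · have h0f : (0 : ℕ →₀ ℕ) ∈ f.support := MvPolynomial.mem_support_iff.2 c0.ne'
          have h0ne : (0 : ℕ →₀ ℕ) ≠ Lead r := by
            intro hcon
            have := DFunLike.congr_fun hcon 0
            rw [Finsupp.zero_apply, Lead_apply, if_pos (by omega)] at this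
            exact absurd this.symm one_ne_zero
          obtain ⟨i, hi, hmin, -⟩ := main 0 h0f h0ne
          exact ⟨i, by omega, minTransfer i hi hmin, rfl⟩
      · obtain ⟨hr, hcoeff, hme⟩ := desc m hm hm0
        have hne' : m - e ≠ Lead r := by
          intro hcon
          apply hmne
          rw [leadsucc, ← hcon]
          exact hme
        obtain ⟨i, hi, hmin, hz⟩ := main (m - e) (MvPolynomial.mem_support_iff.2 hcoeff) hne'
        refine ⟨i, by omega, minTransfer i hi hmin, ?_⟩
        have h1 : m i = (m - e) i := by
          conv_lhs => rw [hme]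
          rw [Finsupp.add_apply, eapp i (by omega), add_zero]
        rw [h1]
        exact hz

end StarAux

/-- Any monomial of a low-defect polynomial of degree `r` other
than the leading monomial `x₁⋯x_r` omits some variable minimal in the nesting
order. -/
theorem nonleading_term_omits_minimal (r : ℕ) (f : MvPolynomial ℕ ℤ)
    (hf : ∃ C, LDP r f C) (m : ℕ →₀ ℕ) (hm : m ∈ f.support)
    (hne : m ≠ ∑ i ∈ Finset.range r, Finsupp.single i 1) :
    ∃ i < r, IsMinVar r f i ∧ m i = 0 := by
  obtain ⟨C, h⟩ := hf
  exact (LDP_inv h).2.2.2.2 m hm hne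
end

section
/- Let f be a low-defect polynomial and x a variable of f. Then among the monomials appearing in f that are divisible by x there is a least one under divisibility (the key of x), and among the monomials of f not divisible by x there is a greatest one under divisibility (the anti-key of x). Moreover, for any two variables x and y of f, the following are equivalent: (a) every monomial of f divisible by x is divisible by y; (b) the key of y divides the key of x; (c) the anti-key of y divides the anti-key of x. -/
namespace KeysAux
open MvPolynomial

/-- the shifted exponent vector -/
noncomputable def shiftF (r : ℕ) (m : ℕ →₀ ℕ) : ℕ →₀ ℕ := Finsupp.mapDomain (· + r) m

lemma shiftF_apply (r : ℕ) (m : ℕ →₀ ℕ) (k : ℕ) :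
    shiftF r m k = if r ≤ k then m (k - r) else 0 := by
  unfold shiftF
  by_cases h : r ≤ k
  · have hk : k = (k - r) + r := (Nat.sub_add_cancel h).symm
    rw [if_pos h, hk, Finsupp.mapDomain_apply (add_left_injective r)]
    simp
  · rw [if_neg h, Finsupp.mapDomain_notin_range]
    rintro ⟨j, rfl⟩
    exact h (Nat.le_add_left r j)

/-- the full monomial -/
noncomputable def Msum (r : ℕ) : ℕ →₀ ℕ := ∑ i ∈ Finset.range r, Finsupp.single i 1

lemma Msum_apply (r k : ℕ) : Msum r k = if k < r then 1 else 0 := by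
  unfold Msum
  rw [Finsupp.finset_sum_apply]
  simp [Finsupp.single_apply, Finset.sum_ite_eq, Finset.mem_range]

lemma filter_add_filter_neg (p : ℕ → Prop) [DecidablePred p] (m : ℕ →₀ ℕ) :
    m.filter p + m.filter (fun k => ¬ p k) = m := by
  ext k
  by_cases h : p k <;>
    simp [Finsupp.add_apply, Finsupp.filter_apply, h]

lemma filter_le (p : ℕ → Prop) [DecidablePred p] (m : ℕ →₀ ℕ) : m.filter p ≤ m := by
  intro k
  by_cases h : p k <;> simp [Finsupp.filter_apply, h]

/-- coefficient of a product of polynomials with disjoint variable ranges -/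
lemma coeff_mul_split (f g : MvPolynomial ℕ ℤ) (r : ℕ)
    (hf : ∀ a ∈ f.support, ∀ k, a k ≠ 0 → k < r)
    (hg : ∀ b ∈ g.support, ∀ k, b k ≠ 0 → r ≤ k)
    (m : ℕ →₀ ℕ) :
    coeff m (f * g)
      = coeff (m.filter (fun k => k < r)) f * coeff (m.filter (fun k => ¬ k < r)) g := by
  classical
  rw [coeff_mul]
  refine Finset.sum_eq_single (m.filter (fun k => k < r), m.filter (fun k => ¬ k < r)) ?_ ?_
  · rintro ⟨a, b⟩ hab hne
    rw [Finset.HasAntidiagonal.mem_antidiagonal] at hab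
    have hab2 : a + b = m := hab
    by_contra hcon
    have ha : a ∈ f.support := by
      rw [mem_support_iff]; intro h; rw [h, zero_mul] at hcon; exact hcon rfl
    have hb : b ∈ g.support := by
      rw [mem_support_iff]; intro h; rw [h, mul_zero] at hcon; exact hcon rfl
    have ha' : a = m.filter (fun k => k < r) := by
      ext k
      rw [Finsupp.filter_apply]
      by_cases h : k < r
      · rw [if_pos h, ← hab2, Finsupp.add_apply]
        have : b k = 0 := by
          by_contra hbk
          exact absurd (hg b hb k hbk) (not_le.mpr h)
        omega
      · rw [if_neg h]
        by_contra hak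
        exact h (hf a ha k hak)
    have hb' : b = m.filter (fun k => ¬ k < r) := by
      ext k
      rw [Finsupp.filter_apply]
      by_cases h : k < r
      · rw [if_neg (not_not_intro h)]
        by_contra hbk
        exact absurd (hg b hb k hbk) (not_le.mpr h)
      · rw [if_pos h, ← hab2, Finsupp.add_apply]
        have : a k = 0 := by
          by_contra hak
          exact h (hf a ha k hak)
        omega
    exact hne (Prod.ext ha' hb')
  · intro hnot
    exact absurd (Finset.HasAntidiagonal.mem_antidiagonal.mpr (filter_add_filter_neg _ m)) hnot

lemma filter_eq_self {p : ℕ → Prop} [DecidablePred p] {a : ℕ →₀ ℕ}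
    (h : ∀ k, a k ≠ 0 → p k) : a.filter p = a := by
  ext k
  rw [Finsupp.filter_apply]
  by_cases hp : p k
  · rw [if_pos hp]
  · rw [if_neg hp]
    by_contra h0
    exact hp (h k (fun hh => h0 hh.symm))

lemma filter_eq_zero {p : ℕ → Prop} [DecidablePred p] {a : ℕ →₀ ℕ}
    (h : ∀ k, a k ≠ 0 → ¬ p k) : a.filter p = 0 := by
  ext k
  rw [Finsupp.filter_apply]
  by_cases hp : p k
  · rw [if_pos hp]
    by_contra h0
    exact h k h0 hp
  · rw [if_neg hp]; rfl

lemma le_add_right' (a b : ℕ →₀ ℕ) : a ≤ a + b := Finsupp.le_def.mpr fun k => by simp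
lemma le_add_left' (a b : ℕ →₀ ℕ) : b ≤ a + b := Finsupp.le_def.mpr fun k => by simp

lemma shiftF_mono {r : ℕ} {a b : ℕ →₀ ℕ} (h : a ≤ b) : shiftF r a ≤ shiftF r b := by
  intro k
  rw [shiftF_apply, shiftF_apply]
  split_ifs with hk
  · exact h _
  · exact le_refl 0

lemma shiftF_zero (r : ℕ) : shiftF r (0 : ℕ →₀ ℕ) = 0 := Finsupp.mapDomain_zero

/-- The inductive invariant for low-defect polynomials. -/
def Inv (r : ℕ) (f : MvPolynomial ℕ ℤ) : Prop :=
  (∀ m ∈ f.support, ∀ k, m k ≠ 0 → k < r) ∧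
  ((0 : ℕ →₀ ℕ) ∈ f.support) ∧
  (Msum r ∈ f.support) ∧
  (∀ m ∈ f.support, m ≤ Msum r) ∧
  (∀ i < r, ∃ key ∈ f.support, key i ≠ 0 ∧ ∀ m ∈ f.support, m i ≠ 0 → key ≤ m) ∧
  (∀ i < r, ∃ akey ∈ f.support, akey i = 0 ∧ ∀ m ∈ f.support, m i = 0 → m ≤ akey)

lemma Msum_zero : Msum 0 = 0 := by
  ext k; rw [Msum_apply]; simp

lemma inv_const (k : ℕ) (hk : 0 < k) : Inv 0 (C (k : ℤ) : MvPolynomial ℕ ℤ) := by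
  have hco : ∀ m, coeff m (C (k : ℤ) : MvPolynomial ℕ ℤ) = if 0 = m then (k : ℤ) else 0 :=
    fun m => coeff_C m _
  have hkz : (k : ℤ) ≠ 0 := by exact_mod_cast hk.ne'
  have hmem : ∀ m, m ∈ (C (k : ℤ) : MvPolynomial ℕ ℤ).support ↔ m = 0 := by
    intro m
    rw [mem_support_iff, hco]
    constructor
    · intro h
      by_contra hm
      rw [if_neg (fun hh => hm hh.symm)] at h
      exact h rfl
    · intro h; subst h; rw [if_pos rfl]; exact hkz
  refine ⟨?_, ?_, ?_, ?_, ?_, ?_⟩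
  · intro m hm j hj
    rw [hmem] at hm
    subst hm
    simp at hj
  · exact (hmem 0).mpr rfl
  · rw [Msum_zero]; exact (hmem 0).mpr rfl
  · intro m hm
    rw [hmem] at hm
    subst hm
    rw [Msum_zero]
  · intro i hi; omega
  · intro i hi; omega

lemma inv_mul {r₁ r₂ : ℕ} {f₁ f₂ : MvPolynomial ℕ ℤ}
    (h₁ : Inv r₁ f₁) (h₂ : Inv r₂ f₂) :
    Inv (r₁ + r₂) (f₁ * rename (· + r₁) f₂) := by
  classical
  obtain ⟨hv₁, h0₁, hM₁, hle₁, hkey₁, hak₁⟩ := h₁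
  obtain ⟨hv₂, h0₂, hM₂, hle₂, hkey₂, hak₂⟩ := h₂
  set g₂ := rename (· + r₁) f₂ with hg₂
  have hinj : Function.Injective (· + r₁) := add_left_injective r₁
  have hg₂supp : ∀ b, b ∈ g₂.support ↔ ∃ m₂ ∈ f₂.support, b = shiftF r₁ m₂ := by
    intro b
    rw [hg₂, support_rename_of_injective hinj, Finset.mem_image]
    constructor
    · rintro ⟨m₂, hm₂, rfl⟩; exact ⟨m₂, hm₂, rfl⟩
    · rintro ⟨m₂, hm₂, rfl⟩; exact ⟨m₂, hm₂, rfl⟩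
  have hg₂mem : ∀ m₂ ∈ f₂.support, shiftF r₁ m₂ ∈ g₂.support := fun m₂ hm₂ =>
    (hg₂supp _).mpr ⟨m₂, hm₂, rfl⟩
  have hg₂hi : ∀ b ∈ g₂.support, ∀ k, b k ≠ 0 → r₁ ≤ k := by
    intro b hb k hk
    obtain ⟨m₂, hm₂, rfl⟩ := (hg₂supp b).mp hb
    rw [shiftF_apply] at hk
    by_contra h
    rw [if_neg h] at hk
    exact hk rfl
  have hsupp : ∀ m, m ∈ (f₁ * g₂).support ↔
      m.filter (fun k => k < r₁) ∈ f₁.support ∧ m.filter (fun k => ¬ k < r₁) ∈ g₂.support := by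
    intro m
    rw [mem_support_iff, coeff_mul_split f₁ g₂ r₁ hv₁ hg₂hi, mul_ne_zero_iff,
      mem_support_iff, mem_support_iff]
  have hcomb : ∀ m₁ ∈ f₁.support, ∀ m₂ ∈ f₂.support,
      (m₁ + shiftF r₁ m₂) ∈ (f₁ * g₂).support := by
    intro m₁ hm₁ m₂ hm₂
    rw [hsupp, Finsupp.filter_add, Finsupp.filter_add]
    have e1 : m₁.filter (fun k => k < r₁) = m₁ :=
      filter_eq_self (fun k hk => hv₁ m₁ hm₁ k hk)
    have e2 : (shiftF r₁ m₂).filter (fun k => k < r₁) = 0 :=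
      filter_eq_zero (fun k hk => not_lt.mpr (hg₂hi _ (hg₂mem m₂ hm₂) k hk))
    have e3 : m₁.filter (fun k => ¬ k < r₁) = 0 :=
      filter_eq_zero (fun k hk => not_not_intro (hv₁ m₁ hm₁ k hk))
    have e4 : (shiftF r₁ m₂).filter (fun k => ¬ k < r₁) = shiftF r₁ m₂ :=
      filter_eq_self (fun k hk => not_lt.mpr (hg₂hi _ (hg₂mem m₂ hm₂) k hk))
    rw [e1, e2, e3, e4, add_zero, zero_add]
    exact ⟨hm₁, hg₂mem m₂ hm₂⟩
  have hdec : ∀ m ∈ (f₁ * g₂).support,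
      ∃ m₁ ∈ f₁.support, ∃ m₂ ∈ f₂.support, m = m₁ + shiftF r₁ m₂ := by
    intro m hm
    obtain ⟨hone, htwo⟩ := (hsupp m).mp hm
    obtain ⟨m₂, hm₂, he⟩ := (hg₂supp _).mp htwo
    exact ⟨_, hone, m₂, hm₂, by rw [← he, filter_add_filter_neg]⟩
  have happly : ∀ (m₁ m₂ : ℕ →₀ ℕ) (k : ℕ),
      (m₁ + shiftF r₁ m₂) k = m₁ k + (if r₁ ≤ k then m₂ (k - r₁) else 0) := by
    intro m₁ m₂ k
    rw [Finsupp.add_apply, shiftF_apply]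
  have eM : Msum (r₁ + r₂) = Msum r₁ + shiftF r₁ (Msum r₂) := by
    ext k
    rw [Finsupp.add_apply, shiftF_apply, Msum_apply, Msum_apply]
    by_cases h : r₁ ≤ k
    · rw [if_pos h, Msum_apply]
      split_ifs <;> omega
    · rw [if_neg h]
      split_ifs <;> omega
  refine ⟨?_, ?_, ?_, ?_, ?_, ?_⟩
  · -- vars bound
    intro m hm k hk
    obtain ⟨m₁, hm₁, m₂, hm₂, rfl⟩ := hdec m hm
    rw [happly] at hk
    by_cases h : r₁ ≤ k
    · rw [if_pos h] at hk
      by_cases h1 : m₁ k = 0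
      · rw [h1, zero_add] at hk
        have := hv₂ m₂ hm₂ (k - r₁) hk
        omega
      · have := hv₁ m₁ hm₁ k h1
        omega
    · omega
  · -- zero mem
    have : (0 : ℕ →₀ ℕ) = 0 + shiftF r₁ 0 := by rw [shiftF_zero, add_zero]
    rw [this]
    exact hcomb 0 h0₁ 0 h0₂
  · -- Msum mem
    rw [eM]
    exact hcomb _ hM₁ _ hM₂
  · -- bound
    intro m hm
    obtain ⟨m₁, hm₁, m₂, hm₂, rfl⟩ := hdec m hm
    rw [eM]
    exact add_le_add (hle₁ m₁ hm₁) (shiftF_mono (hle₂ m₂ hm₂))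
  · -- keys
    intro i hi
    by_cases hir : i < r₁
    · obtain ⟨key, hkmem, hki, hkmin⟩ := hkey₁ i hir
      refine ⟨key, ?_, hki, ?_⟩
      · have := hcomb key hkmem 0 h0₂
        rwa [shiftF_zero, add_zero] at this
      · intro m hm hmi
        obtain ⟨m₁, hm₁, m₂, hm₂, rfl⟩ := hdec m hm
        have hm₁i : m₁ i ≠ 0 := by
          rw [happly, if_neg (not_le.mpr hir), add_zero] at hmi
          exact hmi
        exact le_trans (hkmin m₁ hm₁ hm₁i) (le_add_right' _ _)
    · obtain ⟨key, hkmem, hki, hkmin⟩ := hkey₂ (i - r₁) (by omega)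
      refine ⟨shiftF r₁ key, ?_, ?_, ?_⟩
      · have := hcomb 0 h0₁ key hkmem
        rwa [zero_add] at this
      · rw [shiftF_apply, if_pos (not_lt.mp hir)]
        exact hki
      · intro m hm hmi
        obtain ⟨m₁, hm₁, m₂, hm₂, rfl⟩ := hdec m hm
        have hm₂i : m₂ (i - r₁) ≠ 0 := by
          rw [happly, if_pos (not_lt.mp hir)] at hmi
          have hm1 : m₁ i = 0 := by
            by_contra h
            exact hir (hv₁ m₁ hm₁ i h)
          omega
        exact le_trans (shiftF_mono (hkmin m₂ hm₂ hm₂i)) (le_add_left' _ _)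
  · -- antikeys
    intro i hi
    by_cases hir : i < r₁
    · obtain ⟨ak, hamem, hai, hamax⟩ := hak₁ i hir
      refine ⟨ak + shiftF r₁ (Msum r₂), hcomb _ hamem _ hM₂, ?_, ?_⟩
      · rw [happly, if_neg (not_le.mpr hir), add_zero]
        exact hai
      · intro m hm hmi
        obtain ⟨m₁, hm₁, m₂, hm₂, rfl⟩ := hdec m hm
        have hm₁i : m₁ i = 0 := by
          rw [happly, if_neg (not_le.mpr hir), add_zero] at hmi
          exact hmi
        exact add_le_add (hamax m₁ hm₁ hm₁i) (shiftF_mono (hle₂ m₂ hm₂))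
    · obtain ⟨ak, hamem, hai, hamax⟩ := hak₂ (i - r₁) (by omega)
      refine ⟨Msum r₁ + shiftF r₁ ak, hcomb _ hM₁ _ hamem, ?_, ?_⟩
      · rw [happly, if_pos (not_lt.mp hir), Msum_apply, if_neg hir, zero_add]
        exact hai
      · intro m hm hmi
        obtain ⟨m₁, hm₁, m₂, hm₂, rfl⟩ := hdec m hm
        rw [happly, if_pos (not_lt.mp hir)] at hmi
        have hm₂i : m₂ (i - r₁) = 0 := by omega
        exact add_le_add (hle₁ m₁ hm₁) (shiftF_mono (hamax m₂ hm₂ hm₂i))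

lemma inv_step {r : ℕ} {f : MvPolynomial ℕ ℤ} (c : ℕ) (hc : 0 < c) (h : Inv r f) :
    Inv (r + 1) (f * X r + C (c : ℤ)) := by
  classical
  obtain ⟨hv, h0, hM, hle, hkey, hak⟩ := h
  set g := f * X r + C (c : ℤ) with hg
  have hcz : (c : ℤ) ≠ 0 := by exact_mod_cast hc.ne'
  have hcoeff : ∀ m, coeff m g =
      (if r ∈ m.support then coeff (m - Finsupp.single r 1) f else 0)
        + (if 0 = m then (c : ℤ) else 0) := by
    intro m
    rw [hg, coeff_add, coeff_mul_X', coeff_C]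
  have hsupp : ∀ m, m ∈ g.support ↔
      (m = 0 ∨ (m r ≠ 0 ∧ m - Finsupp.single r 1 ∈ f.support)) := by
    intro m
    rw [mem_support_iff, hcoeff]
    by_cases hmr : m r = 0
    · have hns : r ∉ m.support := by
        rw [Finsupp.mem_support_iff]; exact not_not_intro hmr
      rw [if_neg hns, zero_add]
      constructor
      · intro hh
        left
        by_contra hm
        rw [if_neg (fun he => hm he.symm)] at hh
        exact hh rfl
      · rintro (rfl | ⟨hh, _⟩)
        · rw [if_pos rfl]; exact hcz
        · exact absurd hmr hh
    · have hns : r ∈ m.support := Finsupp.mem_support_iff.mpr hmr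
      have hm0 : m ≠ 0 := by
        intro hh; rw [hh] at hmr; exact hmr rfl
      rw [if_pos hns, if_neg (fun he => hm0 he.symm), add_zero]
      constructor
      · intro hh
        exact Or.inr ⟨hmr, mem_support_iff.mpr hh⟩
      · rintro (rfl | ⟨_, hh⟩)
        · exact absurd rfl hm0
        · exact mem_support_iff.mp hh
  have hdecomp : ∀ m : ℕ →₀ ℕ, m r ≠ 0 → m - Finsupp.single r 1 ∈ f.support →
      m = (m - Finsupp.single r 1) + Finsupp.single r 1 := by
    intro m hmr hmem
    ext k
    rw [Finsupp.add_apply, Finsupp.tsub_apply, Finsupp.single_apply]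
    by_cases hk : r = k
    · subst hk
      rw [if_pos rfl]
      omega
    · rw [if_neg hk]
      omega
  have hmem' : ∀ m' ∈ f.support, m' + Finsupp.single r 1 ∈ g.support := by
    intro m' hm'
    rw [hsupp]
    right
    constructor
    · simp [Finsupp.add_apply, Finsupp.single_apply]
    · rwa [add_tsub_cancel_right]
  have happr : ∀ (m' : ℕ →₀ ℕ) (k : ℕ), k ≠ r →
      (m' + Finsupp.single r 1 : ℕ →₀ ℕ) k = m' k := by
    intro m' k hk
    rw [Finsupp.add_apply, Finsupp.single_apply, if_neg (fun he => hk he.symm), add_zero]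
  have eM : Msum (r + 1) = Msum r + Finsupp.single r 1 := by
    ext k
    rw [Finsupp.add_apply, Msum_apply, Msum_apply, Finsupp.single_apply]
    split_ifs <;> omega
  refine ⟨?_, ?_, ?_, ?_, ?_, ?_⟩
  · -- vars bound
    intro m hm k hk
    rcases (hsupp m).mp hm with rfl | ⟨hmr, hmem⟩
    · simp at hk
    · by_cases hkr : k = r
      · omega
      · rw [hdecomp m hmr hmem, happr _ _ hkr] at hk
        have := hv _ hmem k hk
        omega
  · exact (hsupp 0).mpr (Or.inl rfl)
  · rw [eM]
    exact hmem' _ hM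
  · intro m hm
    rcases (hsupp m).mp hm with rfl | ⟨hmr, hmem⟩
    · exact zero_le
    · rw [hdecomp m hmr hmem, eM]
      exact add_le_add (hle _ hmem) le_rfl
  · -- keys
    intro i hi
    by_cases hir : i = r
    · subst hir
      refine ⟨Finsupp.single i 1, ?_, by simp, ?_⟩
      · have := hmem' 0 h0
        rwa [zero_add] at this
      · intro m hm hmi
        rw [Finsupp.single_le_iff]
        omega
    · obtain ⟨key, hkmem, hki, hkmin⟩ := hkey i (by omega)
      refine ⟨key + Finsupp.single r 1, hmem' _ hkmem, ?_, ?_⟩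
      · rw [happr _ _ hir]
        exact hki
      · intro m hm hmi
        rcases (hsupp m).mp hm with rfl | ⟨hmr, hmem⟩
        · simp at hmi
        · rw [hdecomp m hmr hmem]
          have hmi' : (m - Finsupp.single r 1 : ℕ →₀ ℕ) i ≠ 0 := by
            rw [hdecomp m hmr hmem, happr _ _ hir] at hmi
            exact hmi
          exact add_le_add (hkmin _ hmem hmi') le_rfl
  · -- antikeys
    intro i hi
    by_cases hir : i = r
    · subst hir
      refine ⟨0, (hsupp 0).mpr (Or.inl rfl), rfl, ?_⟩
      intro m hm hmi
      rcases (hsupp m).mp hm with rfl | ⟨hmr, _⟩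
      · exact le_rfl
      · exact absurd hmi hmr
    · obtain ⟨ak, hamem, hai, hamax⟩ := hak i (by omega)
      refine ⟨ak + Finsupp.single r 1, hmem' _ hamem, ?_, ?_⟩
      · rw [happr _ _ hir]
        exact hai
      · intro m hm hmi
        rcases (hsupp m).mp hm with rfl | ⟨hmr, hmem⟩
        · exact zero_le
        · rw [hdecomp m hmr hmem]
          have hmi' : (m - Finsupp.single r 1 : ℕ →₀ ℕ) i = 0 := by
            rw [hdecomp m hmr hmem, happr _ _ hir] at hmi
            exact hmi
          exact add_le_add (hamax _ hmem hmi') le_rfl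


lemma inv_of_LDP {r : ℕ} {f : MvPolynomial ℕ ℤ} {Cc : ℕ} (h : LDP r f Cc) : Inv r f := by
  induction h with
  | const k C hk hC => exact inv_const k hk
  | mul h1 h2 ih1 ih2 => exact inv_mul ih1 ih2
  | step c D hc hD h ih => exact inv_step c hc ih

end KeysAux

/-- Keys and anti-keys. Every variable of a low-defect
polynomial has a key (least monomial divisible by it) and an anti-key (greatest
monomial not divisible by it), and the nesting order is detected by divisibility
of keys, or of anti-keys.  Monomials are recorded by their exponent vectors, so
that divisibility of monomials is the pointwise order on `ℕ →₀ ℕ`. -/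
theorem keys_antikeys (f : MvPolynomial ℕ ℤ) (hf : LowDefectPoly f)
    (i j : ℕ) (hi : i ∈ f.vars) (hj : j ∈ f.vars) :
    (∃ key ∈ f.support, key i ≠ 0 ∧ ∀ m ∈ f.support, m i ≠ 0 → key ≤ m) ∧
    (∃ akey ∈ f.support, akey i = 0 ∧ ∀ m ∈ f.support, m i = 0 → m ≤ akey) ∧
    (∀ keyi keyj : ℕ →₀ ℕ,
      (keyi ∈ f.support ∧ keyi i ≠ 0 ∧ ∀ m ∈ f.support, m i ≠ 0 → keyi ≤ m) →
      (keyj ∈ f.support ∧ keyj j ≠ 0 ∧ ∀ m ∈ f.support, m j ≠ 0 → keyj ≤ m) →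
      ((∀ m ∈ f.support, m i ≠ 0 → m j ≠ 0) ↔ keyj ≤ keyi)) ∧
    (∀ akeyi akeyj : ℕ →₀ ℕ,
      (akeyi ∈ f.support ∧ akeyi i = 0 ∧ ∀ m ∈ f.support, m i = 0 → m ≤ akeyi) →
      (akeyj ∈ f.support ∧ akeyj j = 0 ∧ ∀ m ∈ f.support, m j = 0 → m ≤ akeyj) →
      ((∀ m ∈ f.support, m i ≠ 0 → m j ≠ 0) ↔ akeyj ≤ akeyi)) := by
  classical
  obtain ⟨r, Cc, h⟩ := hf
  obtain ⟨hv, h0, hM, hle, hkey, hak⟩ := KeysAux.inv_of_LDP h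
  have hir : i < r := by
    obtain ⟨m, hm, him⟩ := (MvPolynomial.mem_vars i).mp hi
    exact hv m hm i (Finsupp.mem_support_iff.mp him)
  refine ⟨hkey i hir, hak i hir, ?_, ?_⟩
  · rintro keyi keyj ⟨hki, hkii, hkimin⟩ ⟨hkj, hkjj, hkjmin⟩
    constructor
    · intro hab
      exact hkjmin keyi hki (hab keyi hki hkii)
    · intro hle' m hm hmi
      have h1 : keyj ≤ m := le_trans hle' (hkimin m hm hmi)
      have h2 := Finsupp.le_def.mp h1 j
      intro hmj
      rw [hmj] at h2
      exact hkjj (Nat.le_zero.mp h2)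
  · rintro akeyi akeyj ⟨hai, haii, haimax⟩ ⟨haj, hajj, hajmax⟩
    constructor
    · intro hab
      apply haimax akeyj haj
      by_contra hne
      exact (hab akeyj haj hne) hajj
    · intro hle' m hm hmi
      intro hmj
      have h1 : m ≤ akeyi := le_trans (hajmax m hm hmj) hle'
      have h2 := Finsupp.le_def.mp h1 i
      rw [haii] at h2
      exact hmi (Nat.le_zero.mp h2)
end
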